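/- arXiv:1606.03563 — 2 statements merged into one kernel-verified Lean document; each statement's English description precedes it below -/
import Mathlib

section
/- Fix n ≥ 3 and i < j in {1,…,n}. If β and β′ are words in the generators of G_n^2 that are both in good condition and represent the same element of G_n^2, then w_{(i,j)}(β) = w_{(i,j)}(β′) in F_n^2. In other words, w_{(i,j)} is a well-defined invariant on the subgroup of good-condition elements of G_n^2. -/
namespace GnkBrunnian

/-! ## Index types for generators -/

/-- Validity of a pair index: `1 ≤ i < j ≤ n`. -/
abbrev P2ok (n : ℕ) (p : ℕ × ℕ) : Prop := 1 ≤ p.1 ∧ p.1 < p.2 ∧ p.2 ≤ n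

/-- Index type for the generators `a_{ij}` of `G_n^2` (and `b_{ij}` of `PB_n`). -/
abbrev PIdx (n : ℕ) := {p : ℕ × ℕ // P2ok n p}

/-- Validity of a triple index: `1 ≤ i < j < k ≤ n`. -/
abbrev T3ok (n : ℕ) (t : ℕ × ℕ × ℕ) : Prop :=
  1 ≤ t.1 ∧ t.1 < t.2.1 ∧ t.2.1 < t.2.2 ∧ t.2.2 ≤ n

/-- Index type for the generators `a_{ijk}` of `G_n^3`. -/
abbrev TIdx (n : ℕ) := {t : ℕ × ℕ × ℕ // T3ok n t}

def sort2 (a b : ℕ) : ℕ × ℕ := (min a b, max a b)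

def sort3 (a b c : ℕ) : ℕ × ℕ × ℕ :=
  (min a (min b c), a + b + c - min a (min b c) - max a (max b c), max a (max b c))

def pairSet {n : ℕ} (p : PIdx n) : Finset ℕ := {p.1.1, p.1.2}

def tripSet {n : ℕ} (t : TIdx n) : Finset ℕ := {t.1.1, t.1.2.1, t.1.2.2}

/-- Reindexing after deleting the strand `m` : indices above `m` are decreased by one. -/
def del (m x : ℕ) : ℕ := if m < x then x - 1 else x

/-! ## The group `G_n^2` -/

/-- The free-group letter `a_{\{a,b\}}` (trivial if the index is out of range). -/
def fgen2 (n a b : ℕ) : FreeGroup (PIdx n) :=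
  if h : P2ok n (sort2 a b) then FreeGroup.of ⟨sort2 a b, h⟩ else 1

/-- The defining relators of `G_n^2`. -/
def rels2 (n : ℕ) : Set (FreeGroup (PIdx n)) :=
  {r | ∃ a : PIdx n, r = .of a * .of a} ∪
  {r | ∃ i j k l : ℕ,
      1 ≤ i ∧ i ≤ n ∧ 1 ≤ j ∧ j ≤ n ∧ 1 ≤ k ∧ k ≤ n ∧ 1 ≤ l ∧ l ≤ n ∧
      i ≠ j ∧ i ≠ k ∧ i ≠ l ∧ j ≠ k ∧ j ≠ l ∧ k ≠ l ∧
      r = fgen2 n i j * fgen2 n k l * (fgen2 n i j)⁻¹ * (fgen2 n k l)⁻¹} ∪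
  {r | ∃ i j k : ℕ,
      1 ≤ i ∧ i ≤ n ∧ 1 ≤ j ∧ j ≤ n ∧ 1 ≤ k ∧ k ≤ n ∧ i ≠ j ∧ i ≠ k ∧ j ≠ k ∧
      r = fgen2 n i j * fgen2 n i k * fgen2 n j k *
          (fgen2 n j k * fgen2 n i k * fgen2 n i j)⁻¹}

/-- The group `G_n^2`. -/
abbrev G2 (n : ℕ) := PresentedGroup (rels2 n)

/-- The generator `a_{\{a,b\}}` of `G_n^2` (trivial if the index is out of range). -/
def ggen2 (n a b : ℕ) : G2 n :=
  if h : P2ok n (sort2 a b) then PresentedGroup.of ⟨sort2 a b, h⟩ else 1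

/-- The element of `G_n^2` represented by a word in the generators. -/
def toG2 {n : ℕ} (β : List (PIdx n)) : G2 n :=
  (β.map fun a => (PresentedGroup.of a : G2 n)).prod

/-! ## The group `G_n^3` -/

/-- The free-group letter `a_{\{a,b,c\}}` (trivial if the index is out of range). -/
def fgen3 (n a b c : ℕ) : FreeGroup (TIdx n) :=
  if h : T3ok n (sort3 a b c) then FreeGroup.of ⟨sort3 a b c, h⟩ else 1

/-- The defining relators of `G_n^3`. -/
def rels3 (n : ℕ) : Set (FreeGroup (TIdx n)) :=
  {r | ∃ a : TIdx n, r = .of a * .of a} ∪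
  {r | ∃ a b : TIdx n, (tripSet a ∩ tripSet b).card < 2 ∧
      r = .of a * .of b * (.of a)⁻¹ * (.of b)⁻¹} ∪
  {r | ∃ i j k l : ℕ,
      1 ≤ i ∧ i ≤ n ∧ 1 ≤ j ∧ j ≤ n ∧ 1 ≤ k ∧ k ≤ n ∧ 1 ≤ l ∧ l ≤ n ∧
      i ≠ j ∧ i ≠ k ∧ i ≠ l ∧ j ≠ k ∧ j ≠ l ∧ k ≠ l ∧
      r = fgen3 n i j k * fgen3 n i j l * fgen3 n i k l * fgen3 n j k l *
          (fgen3 n j k l * fgen3 n i k l * fgen3 n i j l * fgen3 n i j k)⁻¹}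

/-- The group `G_n^3`. -/
abbrev G3 (n : ℕ) := PresentedGroup (rels3 n)

/-- The generator `a_{\{a,b,c\}}` of `G_n^3` (trivial if the index is out of range). -/
def ggen3 (n a b c : ℕ) : G3 n :=
  if h : T3ok n (sort3 a b c) then PresentedGroup.of ⟨sort3 a b c, h⟩ else 1

/-- The element of `G_n^3` represented by a word in the generators. -/
def toG3 {n : ℕ} (β : List (TIdx n)) : G3 n :=
  (β.map fun a => (PresentedGroup.of a : G3 n)).prod

/-! ## The pure braid group `PB_n` (standard Artin/Birman presentation) -/

/-- The defining relators of the pure braid group on `n` strands, in the standard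
presentation on the generators `b_{ij} = A_{ij}`, `1 ≤ i < j ≤ n`. -/
def relsPB (n : ℕ) : Set (FreeGroup (PIdx n)) :=
  {x | ∃ r s i j : ℕ, P2ok n (r, s) ∧ P2ok n (i, j) ∧ (s < i ∨ (i < r ∧ s < j)) ∧
      x = (fgen2 n r s)⁻¹ * fgen2 n i j * fgen2 n r s * (fgen2 n i j)⁻¹} ∪
  {x | ∃ r s j : ℕ, 1 ≤ r ∧ r < s ∧ s < j ∧ j ≤ n ∧
      x = (fgen2 n r s)⁻¹ * fgen2 n s j * fgen2 n r s *
          (fgen2 n r j * fgen2 n s j * (fgen2 n r j)⁻¹)⁻¹} ∪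
  {x | ∃ r s j : ℕ, 1 ≤ r ∧ r < s ∧ s < j ∧ j ≤ n ∧
      x = (fgen2 n r s)⁻¹ * fgen2 n r j * fgen2 n r s *
          ((fgen2 n r j * fgen2 n s j) * fgen2 n r j * (fgen2 n r j * fgen2 n s j)⁻¹)⁻¹} ∪
  {x | ∃ r i s j : ℕ, 1 ≤ r ∧ r < i ∧ i < s ∧ s < j ∧ j ≤ n ∧
      x = (fgen2 n r s)⁻¹ * fgen2 n i j * fgen2 n r s *
          ((fgen2 n r j * fgen2 n s j * (fgen2 n r j)⁻¹ * (fgen2 n s j)⁻¹) * fgen2 n i j *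
           (fgen2 n r j * fgen2 n s j * (fgen2 n r j)⁻¹ * (fgen2 n s j)⁻¹)⁻¹)⁻¹}

/-- The pure braid group on `n` strands. -/
abbrev PB (n : ℕ) := PresentedGroup (relsPB n)

/-- The standard generator `b_{ij}` of `PB_n` (trivial if the index is out of range). -/
def pbgen (n a b : ℕ) : PB n :=
  if h : P2ok n (sort2 a b) then PresentedGroup.of ⟨sort2 a b, h⟩ else 1

/-! ## The elements `c^n_{i,j}` and the homomorphism `φ_n` -/

/-- `c^n_{i,j} = (∏_{k=j+1}^{n} a_{ijk}) * (∏_{k=1, k∉{i,j}}^{j-1} a_{ijk}) ∈ G_n^3`. -/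
def cElt (n i j : ℕ) : G3 n :=
  (((List.range' (j + 1) (n - j)).map fun k => ggen3 n i j k).prod) *
  (((List.range' 1 (j - 1)).map fun k => ggen3 n i j k).prod)

/-- The image of `b_{ij}` under `φ_n`:
`(c^n_{i,i+1})⁻¹ ⋯ (c^n_{i,j-1})⁻¹ (c^n_{i,j})² c^n_{i,j-1} ⋯ c^n_{i,i+1}`. -/
def phiElt (n i j : ℕ) : G3 n :=
  (((List.range' (i + 1) (j - 1 - i)).map fun m => (cElt n i m)⁻¹).prod) *
  (cElt n i j) ^ 2 *
  (((List.range' (i + 1) (j - 1 - i)).reverse.map fun m => cElt n i m).prod)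

/-- `q` is the strand-deletion homomorphism `q_m : G_n^3 → G_{n-1}^3`. -/
def IsShift3 (n m : ℕ) (q : G3 n →* G3 (n - 1)) : Prop :=
  ∀ i j k : ℕ, 1 ≤ i → i < j → j < k → k ≤ n →
    q (ggen3 n i j k) =
      if m = i ∨ m = j ∨ m = k then 1
      else ggen3 (n - 1) (del m i) (del m j) (del m k)

/-- `p` is the strand-deletion homomorphism `p_m : PB_n → PB_{n-1}`. -/
def IsShiftPB (n m : ℕ) (p : PB n →* PB (n - 1)) : Prop :=
  ∀ i j : ℕ, 1 ≤ i → i < j → j ≤ n →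
    p (pbgen n i j) =
      if m = i ∨ m = j then 1 else pbgen (n - 1) (del m i) (del m j)

/-- `φ` is the Manturov–Nikonov homomorphism `φ_n : PB_n → G_n^3`. -/
def IsPhi (n : ℕ) (φ : PB n →* G3 n) : Prop :=
  ∀ i j : ℕ, 1 ≤ i → i < j → j ≤ n → φ (pbgen n i j) = phiElt n i j

/-! ## Words and good condition -/

def good2 {n : ℕ} (β : List (PIdx n)) : Prop := ∀ a : PIdx n, Even (β.count a)

def good3 {n : ℕ} (β : List (TIdx n)) : Prop := ∀ a : TIdx n, Even (β.count a)

/-! ## Free products of copies of `ℤ/2` -/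

/-- The free product of copies of `ℤ/2ℤ` indexed by `ι`. -/
abbrev FP2 (ι : Type) := PresentedGroup {r : FreeGroup ι | ∃ a : ι, r = .of a * .of a}

/-- Indices `l ∈ {1,…,n} \ {i,j,k}`. -/
abbrev SIdx3 (n i j k : ℕ) := {l : ℕ // (1 ≤ l ∧ l ≤ n) ∧ l ≠ i ∧ l ≠ j ∧ l ≠ k}

/-- The group `F_n^3` (for the fixed triple `(i,j,k)`). -/
abbrev F3 (n i j k : ℕ) := FP2 (SIdx3 n i j k → ZMod 2 × ZMod 2)

/-- Indices `k ∈ {1,…,n} \ {i,j}`. -/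
abbrev SIdx2 (n i j : ℕ) := {l : ℕ // (1 ≤ l ∧ l ≤ n) ∧ l ≠ i ∧ l ≠ j}

/-- The group `F_n^2` (for the fixed pair `(i,j)`). -/
abbrev F2 (n i j : ℕ) := FP2 (SIdx2 n i j → ZMod 2)

/-! ## The MN-invariants `w_{(i,j)}` and `w_{(i,j,k)}` -/

/-- The number of occurrences of the generator `a_{\{a,b\}}` in a word over `G_n^2`. -/
def cnt2 {n : ℕ} (β : List (PIdx n)) (a b : ℕ) : ℕ :=
  (β.filter fun x => decide (pairSet x = ({a, b} : Finset ℕ))).length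

/-- The number of occurrences of the generator `a_{\{a,b,c\}}` in a word over `G_n^3`. -/
def cnt3 {n : ℕ} (β : List (TIdx n)) (a b c : ℕ) : ℕ :=
  (β.filter fun x => decide (tripSet x = ({a, b, c} : Finset ℕ))).length

/-- `i_c` for an occurrence of `a_{ij}` with prefix `pre`: `i_c(k) = N_{ik} + N_{jk} (mod 2)`. -/
def iC2 {n : ℕ} (i j : ℕ) (pre : List (PIdx n)) : SIdx2 n i j → ZMod 2 :=
  fun k => ((cnt2 pre i k.1 + cnt2 pre j k.1 : ℕ) : ZMod 2)

/-- The MN-invariant `w_{(i,j)}` of a word over `G_n^2`. -/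
def w2 {n : ℕ} (i j : ℕ) (β : List (PIdx n)) : F2 n i j :=
  ((((List.range β.length).zip β).filter fun x => decide (pairSet x.2 = ({i, j} : Finset ℕ))).map
    fun x => (PresentedGroup.of (iC2 i j (β.take x.1)) : F2 n i j)).prod

/-- `i_c` for an occurrence of `a_{ijk}` with prefix `pre`:
`i_c(l) = (N_{jkl} + N_{ijl}, N_{ikl} + N_{ijl}) (mod 2)`. -/
def iC3 {n : ℕ} (i j k : ℕ) (pre : List (TIdx n)) : SIdx3 n i j k → ZMod 2 × ZMod 2 :=
  fun l => (((cnt3 pre j k l.1 + cnt3 pre i j l.1 : ℕ) : ZMod 2),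
            ((cnt3 pre i k l.1 + cnt3 pre i j l.1 : ℕ) : ZMod 2))

/-- The MN-invariant `w_{(i,j,k)}` of a word over `G_n^3`. -/
def w3 {n : ℕ} (i j k : ℕ) (β : List (TIdx n)) : F3 n i j k :=
  ((((List.range β.length).zip β).filter fun x => decide (tripSet x.2 = ({i, j, k} : Finset ℕ))).map
    fun x => (PresentedGroup.of (iC3 i j k (β.take x.1)) : F3 n i j k)).prod

/-! ## Explicit words for `c^n_{i,j}` and `φ_n(b_{ij})` -/

def tripMkS (n a b c : ℕ) : Option (TIdx n) :=
  if h : T3ok n (sort3 a b c) then some ⟨sort3 a b c, h⟩ else none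

def pairMkS (n a b : ℕ) : Option (PIdx n) :=
  if h : P2ok n (sort2 a b) then some ⟨sort2 a b, h⟩ else none

/-- The defining word of `c^n_{i,j}`. -/
def cWord (n i j : ℕ) : List (TIdx n) :=
  ((List.range' (j + 1) (n - j)).filterMap fun k => tripMkS n i j k) ++
  ((List.range' 1 (j - 1)).filterMap fun k => tripMkS n i j k)

/-- The defining word of `φ_n(b_{ij})`, with the inverses of the `c`-words expanded using
`a⁻¹ = a` for generators (i.e. by reversing the words). -/
def phiWord (n i j : ℕ) : List (TIdx n) :=
  (((List.range' (i + 1) (j - 1 - i)).map fun m => (cWord n i m).reverse).flatten) ++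
  cWord n i j ++ cWord n i j ++
  (((List.range' (i + 1) (j - 1 - i)).reverse.map fun m => cWord n i m).flatten)

/-! ## The group `G_{n,p}^2` (parity) -/

/-- Index type for the generators `a_{ij}^ε` of `G_{n,p}^2`. -/
abbrev PPIdx (n : ℕ) := PIdx n × ZMod 2

def fgenP2 (n a b : ℕ) (e : ZMod 2) : FreeGroup (PPIdx n) :=
  if h : P2ok n (sort2 a b) then FreeGroup.of (⟨sort2 a b, h⟩, e) else 1

/-- The defining relators of `G_{n,p}^2`. -/
def relsP2 (n : ℕ) : Set (FreeGroup (PPIdx n)) :=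
  {r | ∃ a : PPIdx n, r = .of a * .of a} ∪
  {r | ∃ (i j k l : ℕ) (e e' : ZMod 2),
      1 ≤ i ∧ i ≤ n ∧ 1 ≤ j ∧ j ≤ n ∧ 1 ≤ k ∧ k ≤ n ∧ 1 ≤ l ∧ l ≤ n ∧
      i ≠ j ∧ i ≠ k ∧ i ≠ l ∧ j ≠ k ∧ j ≠ l ∧ k ≠ l ∧
      r = fgenP2 n i j e * fgenP2 n k l e' * (fgenP2 n i j e)⁻¹ * (fgenP2 n k l e')⁻¹} ∪
  {r | ∃ (i j k : ℕ) (e1 e2 e3 : ZMod 2),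
      1 ≤ i ∧ i < j ∧ j < k ∧ k ≤ n ∧ e1 + e2 + e3 = 0 ∧
      r = fgenP2 n i j e1 * fgenP2 n i k e2 * fgenP2 n j k e3 *
          (fgenP2 n j k e3 * fgenP2 n i k e2 * fgenP2 n i j e1)⁻¹}

/-- The group `G_{n,p}^2`. -/
abbrev GP2 (n : ℕ) := PresentedGroup (relsP2 n)

/-- The element of `G_{n,p}^2` represented by a word in the generators. -/
def toGP2 {n : ℕ} (β : List (PPIdx n)) : GP2 n :=
  (β.map fun a => (PresentedGroup.of a : GP2 n)).prod

/-! ## The parity invariant `w^p_{ij}` on `G_{n,p}^2` -/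

/-- The number of occurrences of `a_{\{a,b\}}^e` in a word over `G_{n,p}^2`. -/
def cntP2 {n : ℕ} (β : List (PPIdx n)) (a b : ℕ) (e : ZMod 2) : ℕ :=
  (β.filter fun x => decide (pairSet x.1 = ({a, b} : Finset ℕ) ∧ x.2 = e)).length

/-- `i^p_c` for an occurrence of `a_{ij}^e` with prefix `pre`. -/
def iCP2 {n : ℕ} (i j : ℕ) (e : ZMod 2) (pre : List (PPIdx n)) : SIdx2 n i j → ZMod 2 :=
  fun k =>
    if e = 0 then ((cntP2 pre i k.1 0 + cntP2 pre j k.1 0 : ℕ) : ZMod 2)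
    else ((cntP2 pre i k.1 0 + cntP2 pre j k.1 1 : ℕ) : ZMod 2)

/-- The invariant `w^p_{ij}` of a word over `G_{n,p}^2`. -/
def wP2 {n : ℕ} (i j : ℕ) (β : List (PPIdx n)) : F2 n i j :=
  ((((List.range β.length).zip β).filter fun x => decide (pairSet x.2.1 = ({i, j} : Finset ℕ))).map
    fun x => (PresentedGroup.of (iCP2 i j x.2.2 (β.take x.1)) : F2 n i j)).prod

/-! ## The map `ψ_l : G_{n+1}^2 → G_{n,p}^2` -/

/-- The word over `G_{n,p}^2` obtained from a word over `G_{n+1}^2` by deleting the strand `l`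
and recording parities. -/
def psiWord (n l : ℕ) (β : List (PIdx (n + 1))) : List (PPIdx n) :=
  ((List.range β.length).zip β).filterMap fun x =>
    if l = x.2.1.1 ∨ l = x.2.1.2 then none
    else (pairMkS n (del l x.2.1.1) (del l x.2.1.2)).map fun p =>
      (p, ((cnt2 (β.take x.1) x.2.1.1 l + cnt2 (β.take x.1) x.2.1.2 l : ℕ) : ZMod 2))

/-! ## The group `G_{n,p}^3` (parity) -/

/-- Index type for the generators `a_{ijk}^ε` of `G_{n,p}^3`. -/
abbrev TPIdx (n : ℕ) := TIdx n × ZMod 2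

def fgenP3 (n a b c : ℕ) (e : ZMod 2) : FreeGroup (TPIdx n) :=
  if h : T3ok n (sort3 a b c) then FreeGroup.of (⟨sort3 a b c, h⟩, e) else 1

/-- The defining relators of `G_{n,p}^3`. -/
def relsP3 (n : ℕ) : Set (FreeGroup (TPIdx n)) :=
  {r | ∃ a : TPIdx n, r = .of a * .of a} ∪
  {r | ∃ a b : TPIdx n, (tripSet a.1 ∩ tripSet b.1).card < 2 ∧
      r = (.of a * .of b) ^ 2} ∪
  {r | ∃ (i j k l : ℕ) (ei ej ek el : ZMod 2),
      1 ≤ i ∧ i ≤ n ∧ 1 ≤ j ∧ j ≤ n ∧ 1 ≤ k ∧ k ≤ n ∧ 1 ≤ l ∧ l ≤ n ∧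
      i ≠ j ∧ i ≠ k ∧ i ≠ l ∧ j ≠ k ∧ j ≠ l ∧ k ≠ l ∧
      (if max (max i j) (max k l) = i then ej + ek + el
       else if max (max i j) (max k l) = j then ei + ek + el
       else if max (max i j) (max k l) = k then ei + ej + el
       else ei + ej + ek) = 0 ∧
      r = (fgenP3 n i j k el * fgenP3 n i j l ek * fgenP3 n i k l ej * fgenP3 n j k l ei) ^ 2}

/-- The group `G_{n,p}^3`. -/
abbrev GP3 (n : ℕ) := PresentedGroup (relsP3 n)

/-- The element of `G_{n,p}^3` represented by a word in the generators. -/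
def toGP3 {n : ℕ} (β : List (TPIdx n)) : GP3 n :=
  (β.map fun a => (PresentedGroup.of a : GP3 n)).prod

/-! ## The map `f : G_{n+1}^3 → G_{n,p}^3` -/

/-- The word over `G_{n,p}^3` obtained from a word over `G_{n+1}^3` by deleting the letters
containing the index `n+1` and recording parities. -/
def fWord (n : ℕ) (β : List (TIdx (n + 1))) : List (TPIdx n) :=
  ((List.range β.length).zip β).filterMap fun x =>
    if x.2.1.2.2 = n + 1 then none
    else (tripMkS n x.2.1.1 x.2.1.2.1 x.2.1.2.2).map fun t =>
      (t, ((cnt3 (β.take x.1) x.2.1.2.1 x.2.1.2.2 (n + 1) +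
            cnt3 (β.take x.1) x.2.1.1 x.2.1.2.2 (n + 1) : ℕ) : ZMod 2))

/-! ## The parity invariant `w^p_{ijk}` on `G_{n,p}^3` -/

/-- The group `F_n^3` with values in `ℤ/2` (for the parity invariant). -/
abbrev F3p (n i j k : ℕ) := FP2 (SIdx3 n i j k → ZMod 2)

/-- The number of occurrences of `a_{\{a,b,c\}}^e` in a word over `G_{n,p}^3`. -/
def cntP3 {n : ℕ} (β : List (TPIdx n)) (a b c : ℕ) (e : ZMod 2) : ℕ :=
  (β.filter fun x => decide (tripSet x.1 = ({a, b, c} : Finset ℕ) ∧ x.2 = e)).length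

/-- `i^p_c` for an occurrence of `a_{ijk}^e` with prefix `pre` (here `k > i, j`). -/
def iCP3 {n : ℕ} (i j k : ℕ) (e : ZMod 2) (pre : List (TPIdx n)) : SIdx3 n i j k → ZMod 2 :=
  fun l =>
    if e = 0 then
      (if k < l.1 then
        ((cntP3 pre i k l.1 0 + cntP3 pre j k l.1 0 + cntP3 pre i j l.1 1 : ℕ) : ZMod 2)
      else ((cntP3 pre i k l.1 0 + cntP3 pre j k l.1 0 : ℕ) : ZMod 2))
    else
      (if k < l.1 then
        ((cntP3 pre i k l.1 0 + cntP3 pre j k l.1 1 + cntP3 pre i j l.1 0 : ℕ) : ZMod 2)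
      else ((cntP3 pre i k l.1 0 + cntP3 pre j k l.1 1 : ℕ) : ZMod 2))

/-- The invariant `w^p_{ijk}` of a word over `G_{n,p}^3`. -/
def wP3 {n : ℕ} (i j k : ℕ) (β : List (TPIdx n)) : F3p n i j k :=
  ((((List.range β.length).zip β).filter fun x => decide (tripSet x.2.1 = ({i, j, k} : Finset ℕ))).map
    fun x => (PresentedGroup.of (iCP3 i j k x.2.2 (β.take x.1)) : F3p n i j k)).prod


/-! ## Auxiliary development for `statement_7` -/

section Statement7Aux

/-- Squares of generators are trivial in a free product of copies of `ℤ/2`. -/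
lemma FP2_of_sq {ι : Type} (a : ι) :
    (PresentedGroup.of a : FP2 ι) * PresentedGroup.of a = 1 := by
  have h : (FreeGroup.of a * FreeGroup.of a) ∈
      Subgroup.normalClosure {r : FreeGroup ι | ∃ b : ι, r = .of b * .of b} :=
    Subgroup.subset_normalClosure ⟨a, rfl⟩
  have h2 : ((QuotientGroup.mk (FreeGroup.of a * FreeGroup.of a) :
      PresentedGroup {r : FreeGroup ι | ∃ b : ι, r = .of b * .of b})) = 1 :=
    (QuotientGroup.eq_one_iff _).2 h
  exact h2

lemma pair_eq_iff {a b c d : ℕ} :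
    ({a, b} : Finset ℕ) = {c, d} ↔ (a = c ∧ b = d) ∨ (a = d ∧ b = c) := by
  constructor
  · intro h
    have ha : a = c ∨ a = d := by
      have : a ∈ ({c, d} : Finset ℕ) := by rw [← h]; simp
      simpa using this
    have hb : b = c ∨ b = d := by
      have : b ∈ ({c, d} : Finset ℕ) := by rw [← h]; simp
      simpa using this
    have hc : c = a ∨ c = b := by
      have : c ∈ ({a, b} : Finset ℕ) := by rw [h]; simp
      simpa using this
    have hd : d = a ∨ d = b := by
      have : d ∈ ({a, b} : Finset ℕ) := by rw [h]; simp
      simpa using this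
    omega
  · rintro (⟨rfl, rfl⟩ | ⟨rfl, rfl⟩)
    · rfl
    · exact Finset.pair_comm a b

variable (n i j : ℕ)

lemma sort2_ok {a b : ℕ} (h1 : 1 ≤ a) (h2 : a ≤ n) (h3 : 1 ≤ b) (h4 : b ≤ n)
    (h5 : a ≠ b) : P2ok n (sort2 a b) := by
  refine ⟨?_, ?_, ?_⟩ <;> simp [sort2] <;> omega

lemma pairSet_sort {a b : ℕ} (h : P2ok n (sort2 a b)) :
    pairSet (⟨sort2 a b, h⟩ : PIdx n) = {a, b} := by
  simp only [pairSet, sort2]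
  rw [pair_eq_iff]
  omega

lemma pairSet_eq_iff (x : PIdx n) {a b : ℕ} :
    pairSet x = ({a, b} : Finset ℕ) ↔ x.1 = sort2 a b := by
  obtain ⟨h1, h2, h3⟩ := x.2
  simp only [pairSet, sort2, pair_eq_iff, Prod.ext_iff]
  omega

/-- The parity state of a word: occurrence counts modulo 2. -/
def sigF (s : PIdx n → ZMod 2) (k : ℕ) : ZMod 2 :=
  (if h : P2ok n (sort2 i k) then s ⟨sort2 i k, h⟩ else 0) +
  (if h : P2ok n (sort2 j k) then s ⟨sort2 j k, h⟩ else 0)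

lemma sigF_add (s t : PIdx n → ZMod 2) (k : ℕ) :
    sigF n i j (s + t) k = sigF n i j s k + sigF n i j t k := by
  unfold sigF
  split_ifs <;> simp [Pi.add_apply] <;> ring

lemma sigF_zero (k : ℕ) : sigF n i j 0 k = 0 := by
  unfold sigF
  split_ifs <;> simp

/-- The twisting endomorphism of `F2` associated to a parity state. -/
def tauHom (s : PIdx n → ZMod 2) : F2 n i j →* F2 n i j :=
  PresentedGroup.toGroup (f := fun g : SIdx2 n i j → ZMod 2 =>
    (PresentedGroup.of (fun k => g k + sigF n i j s k.1) : F2 n i j)) (by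
      rintro r ⟨a, rfl⟩
      simp only [map_mul, FreeGroup.lift_apply_of]
      exact FP2_of_sq _)

lemma tauHom_of (s : PIdx n → ZMod 2) (g : SIdx2 n i j → ZMod 2) :
    tauHom n i j s (PresentedGroup.of g) =
      PresentedGroup.of (fun k => g k + sigF n i j s k.1) :=
  PresentedGroup.toGroup.of _

lemma tauHom_comp (s t : PIdx n → ZMod 2) :
    (tauHom n i j s).comp (tauHom n i j t) = tauHom n i j (s + t) := by
  apply PresentedGroup.ext
  intro g
  simp only [MonoidHom.comp_apply, tauHom_of]
  congr 1
  funext k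
  rw [sigF_add]
  ring

lemma tauHom_zero_apply (x : F2 n i j) : tauHom n i j 0 x = x := by
  have h : tauHom n i j 0 = MonoidHom.id (F2 n i j) := by
    apply PresentedGroup.ext
    intro g
    simp [tauHom_of, sigF_zero]
  rw [h]; rfl

lemma tauHom_invol (s : PIdx n → ZMod 2) (x : F2 n i j) :
    tauHom n i j s (tauHom n i j s x) = x := by
  have h : (tauHom n i j s).comp (tauHom n i j s) = tauHom n i j 0 := by
    rw [tauHom_comp]
    congr 1
    funext p
    exact CharTwo.add_self_eq_zero _
  have h2 := DFunLike.congr_fun h x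
  simp only [MonoidHom.comp_apply] at h2
  rw [h2, tauHom_zero_apply]

/-- The twisting automorphism of `F2` associated to a parity state. -/
def tauAut (s : PIdx n → ZMod 2) : MulAut (F2 n i j) :=
  { toFun := tauHom n i j s
    invFun := tauHom n i j s
    left_inv := tauHom_invol n i j s
    right_inv := tauHom_invol n i j s
    map_mul' := map_mul _ }

/-- The action of parity states on `F2` by twisting automorphisms. -/
def tauMon : Multiplicative (PIdx n → ZMod 2) →* MulAut (F2 n i j) :=
  { toFun := fun s => tauAut n i j (Multiplicative.toAdd s)
    map_one' := by
      apply MulEquiv.ext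
      intro x
      exact tauHom_zero_apply n i j x
    map_mul' := by
      intro s t
      apply MulEquiv.ext
      intro x
      have := DFunLike.congr_fun (tauHom_comp n i j (Multiplicative.toAdd s)
        (Multiplicative.toAdd t)) x
      simp only [MonoidHom.comp_apply] at this
      exact ((this.trans (by rfl)).symm) }

@[simp] lemma tauMon_ofAdd (s : PIdx n → ZMod 2) (x : F2 n i j) :
    tauMon n i j (Multiplicative.ofAdd s) x = tauHom n i j s x := rfl

/-- The target group: semidirect product of `F2` with the parity states. -/
abbrev Hgrp := SemidirectProduct (F2 n i j) (Multiplicative (PIdx n → ZMod 2)) (tauMon n i j)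

/-- The distinguished generator `of 0` of `F2`. -/
def Egen : F2 n i j := PresentedGroup.of 0

/-- Indicator state of a single generator. -/
def dvec (p : PIdx n) : PIdx n → ZMod 2 := fun q => if q = p then 1 else 0

/-- The image of the generator `p` in the semidirect product. -/
def Xgen (p : PIdx n) : Hgrp n i j :=
  ⟨if pairSet p = ({i, j} : Finset ℕ) then Egen n i j else 1,
    Multiplicative.ofAdd (dvec n p)⟩

lemma sigF_dvec (hi : 1 ≤ i) (hij : i < j) (hj : j ≤ n) (p : PIdx n) (k : SIdx2 n i j) :
    sigF n i j (dvec n p) k.1 =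
      (if pairSet p = ({i, k.1} : Finset ℕ) then 1 else 0) +
      (if pairSet p = ({j, k.1} : Finset ℕ) then 1 else 0) := by
  obtain ⟨⟨hk1, hk2⟩, hki, hkj⟩ := k.2
  have h1 : P2ok n (sort2 i k.1) :=
    sort2_ok n hi (le_trans (le_of_lt hij) hj) hk1 hk2 (fun h => hki h.symm)
  have h2 : P2ok n (sort2 j k.1) :=
    sort2_ok n (by omega) hj hk1 hk2 (fun h => hkj h.symm)
  unfold sigF
  rw [dif_pos h1, dif_pos h2]
  unfold dvec
  have e1 : ((⟨sort2 i k.1, h1⟩ : PIdx n) = p) ↔ pairSet p = ({i, k.1} : Finset ℕ) := by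
    rw [pairSet_eq_iff]
    exact ⟨fun h => by rw [← h], fun h => Subtype.ext h.symm⟩
  have e2 : ((⟨sort2 j k.1, h2⟩ : PIdx n) = p) ↔ pairSet p = ({j, k.1} : Finset ℕ) := by
    rw [pairSet_eq_iff]
    exact ⟨fun h => by rw [← h], fun h => Subtype.ext h.symm⟩
  rw [if_congr e1 rfl rfl, if_congr e2 rfl rfl]

lemma sigF_dvec_ij (hi : 1 ≤ i) (hij : i < j) (hj : j ≤ n) (p : PIdx n)
    (hp : pairSet p = ({i, j} : Finset ℕ)) (k : SIdx2 n i j) :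
    sigF n i j (dvec n p) k.1 = 0 := by
  obtain ⟨⟨hk1, hk2⟩, hki, hkj⟩ := k.2
  rw [sigF_dvec n i j hi hij hj p k, hp]
  simp only [pair_eq_iff]
  split_ifs <;> first | rfl | decide | (exfalso; omega)

lemma sigF_dvec_zero (hi : 1 ≤ i) (hij : i < j) (hj : j ≤ n) (q : PIdx n)
    (h1 : i ∉ pairSet q) (h2 : j ∉ pairSet q) (k : SIdx2 n i j) :
    sigF n i j (dvec n q) k.1 = 0 := by
  rw [sigF_dvec n i j hi hij hj q k]
  rw [if_neg (fun h => h1 (by rw [h]; simp)), if_neg (fun h => h2 (by rw [h]; simp))]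
  decide

lemma sigF_dvec_half (hi : 1 ≤ i) (hij : i < j) (hj : j ≤ n) (q : PIdx n)
    (x c : ℕ) (hx : x = i ∨ x = j) (hc1 : c ≠ i) (hc2 : c ≠ j)
    (hq : pairSet q = {x, c}) (k : SIdx2 n i j) :
    sigF n i j (dvec n q) k.1 = if k.1 = c then 1 else 0 := by
  rw [sigF_dvec n i j hi hij hj q k, hq]
  simp only [pair_eq_iff]
  obtain ⟨⟨hk1, hk2⟩, hki, hkj⟩ := k.2
  rcases hx with rfl | rfl <;>
    split_ifs <;> first | rfl | decide | (exfalso; omega)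

lemma pi_add_self (s : PIdx n → ZMod 2) : s + s = 0 :=
  funext fun _ => CharTwo.add_self_eq_zero _

lemma tauHom_Egen (s : PIdx n → ZMod 2) :
    tauHom n i j s (Egen n i j) = PresentedGroup.of (fun k => sigF n i j s k.1) := by
  unfold Egen
  rw [tauHom_of]
  congr 1
  funext k
  rw [Pi.zero_apply, zero_add]

lemma of_mul_of_eq_one (f g : SIdx2 n i j → ZMod 2) (h : ∀ k, f k = g k) :
    (PresentedGroup.of f : F2 n i j) * PresentedGroup.of g = 1 := by
  have : f = g := funext h
  rw [this]
  exact FP2_of_sq _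

lemma Egen_mul_of (f : SIdx2 n i j → ZMod 2) (hf : ∀ k, f k = 0) :
    Egen n i j * PresentedGroup.of f = 1 := by
  unfold Egen
  exact of_mul_of_eq_one n i j _ _ (fun k => (hf k).symm)

lemma Xsq (hi : 1 ≤ i) (hij : i < j) (hj : j ≤ n) (p : PIdx n) :
    Xgen n i j p * Xgen n i j p = 1 := by
  apply SemidirectProduct.ext
  · by_cases hp : pairSet p = ({i, j} : Finset ℕ)
    · simp only [Xgen, SemidirectProduct.mul_left, if_pos hp, tauMon_ofAdd,
        tauHom_Egen, SemidirectProduct.one_left]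
      exact Egen_mul_of n i j _ (fun k => sigF_dvec_ij n i j hi hij hj p hp k)
    · simp [Xgen, SemidirectProduct.mul_left, if_neg hp]
  · simp only [Xgen, SemidirectProduct.mul_right, SemidirectProduct.one_right,
      ← ofAdd_add, pi_add_self]
    rfl

lemma Xcomm (hi : 1 ≤ i) (hij : i < j) (hj : j ≤ n) (P Q : PIdx n)
    (hd : ∀ x, x ∈ pairSet P → x ∉ pairSet Q) :
    Xgen n i j P * Xgen n i j Q * (Xgen n i j P)⁻¹ * (Xgen n i j Q)⁻¹ = 1 := by
  rw [inv_eq_of_mul_eq_one_right (Xsq n i j hi hij hj P),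
    inv_eq_of_mul_eq_one_right (Xsq n i j hi hij hj Q)]
  apply SemidirectProduct.ext
  · by_cases hP' : pairSet P = ({i, j} : Finset ℕ)
    · have hQi : i ∉ pairSet Q := fun h => hd i (by rw [hP']; simp) h
      have hQj : j ∉ pairSet Q := fun h => hd j (by rw [hP']; simp) h
      have hQ' : pairSet Q ≠ ({i, j} : Finset ℕ) := by
        intro h; exact hQi (by rw [h]; simp)
      simp only [Xgen, if_pos hP', if_neg hQ', SemidirectProduct.mul_left,
        SemidirectProduct.mul_right, map_one, mul_one, one_mul, ← ofAdd_add,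
        tauMon_ofAdd, tauHom_Egen, SemidirectProduct.one_left]
      apply Egen_mul_of
      intro k
      simp [sigF_add, sigF_dvec_ij n i j hi hij hj P hP' k,
        sigF_dvec_zero n i j hi hij hj Q hQi hQj k]
    · by_cases hQ' : pairSet Q = ({i, j} : Finset ℕ)
      · have hPi : i ∉ pairSet P := fun h => hd i h (by rw [hQ']; simp)
        have hPj : j ∉ pairSet P := fun h => hd j h (by rw [hQ']; simp)
        simp only [Xgen, if_pos hQ', if_neg hP', SemidirectProduct.mul_left,
          SemidirectProduct.mul_right, map_one, mul_one, one_mul, ← ofAdd_add,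
          tauMon_ofAdd, tauHom_Egen, tauHom_of, SemidirectProduct.one_left]
        apply of_mul_of_eq_one
        intro k
        simp [sigF_add, sigF_dvec_ij n i j hi hij hj Q hQ' k,
          sigF_dvec_zero n i j hi hij hj P hPi hPj k]
      · simp [Xgen, if_neg hP', if_neg hQ', SemidirectProduct.mul_left]
  · simp only [Xgen, SemidirectProduct.mul_right, SemidirectProduct.one_right,
      ← ofAdd_add]
    have hz : dvec n P + dvec n Q + dvec n P + dvec n Q = 0 := by
      funext q
      simp only [Pi.add_apply, Pi.zero_apply]
      have h2 : ∀ u v : ZMod 2, u + v + u + v = 0 := by decide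
      exact h2 _ _
    rw [hz]
    rfl

lemma Xtriangle (hi : 1 ≤ i) (hij : i < j) (hj : j ≤ n) (a b c : ℕ)
    (hab : a ≠ b) (hac : a ≠ c) (hbc : b ≠ c) (P Q R : PIdx n)
    (hP : pairSet P = {a, b}) (hQ : pairSet Q = {a, c}) (hR : pairSet R = {b, c}) :
    Xgen n i j P * Xgen n i j Q * Xgen n i j R =
      Xgen n i j R * Xgen n i j Q * Xgen n i j P := by
  have of_congr : ∀ f g : SIdx2 n i j → ZMod 2, (∀ k, f k = g k) →
      (PresentedGroup.of f : F2 n i j) = PresentedGroup.of g := by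
    intro f g h
    rw [show f = g from funext h]
  apply SemidirectProduct.ext
  · by_cases hP' : pairSet P = ({i, j} : Finset ℕ)
    · have h1 : ({a, b} : Finset ℕ) = {i, j} := hP.symm.trans hP'
      rw [pair_eq_iff] at h1
      have hQ' : pairSet Q ≠ ({i, j} : Finset ℕ) := by
        rw [hQ]; simp only [ne_eq, pair_eq_iff]; omega
      have hR' : pairSet R ≠ ({i, j} : Finset ℕ) := by
        rw [hR]; simp only [ne_eq, pair_eq_iff]; omega
      simp only [Xgen, if_pos hP', if_neg hQ', if_neg hR', SemidirectProduct.mul_left,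
        SemidirectProduct.mul_right, map_one, mul_one, one_mul, ← ofAdd_add,
        tauMon_ofAdd, tauHom_Egen, tauHom_of]
      unfold Egen
      apply of_congr
      intro k
      simp only [Pi.zero_apply]
      rw [sigF_add,
        sigF_dvec_half n i j hi hij hj R b c (by omega) (by omega) (by omega) hR k,
        sigF_dvec_half n i j hi hij hj Q a c (by omega) (by omega) (by omega) hQ k]
      split_ifs <;> decide
    · by_cases hQ' : pairSet Q = ({i, j} : Finset ℕ)
      · have h1 : ({a, c} : Finset ℕ) = {i, j} := hQ.symm.trans hQ'
        rw [pair_eq_iff] at h1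
        have hR' : pairSet R ≠ ({i, j} : Finset ℕ) := by
          rw [hR]; simp only [ne_eq, pair_eq_iff]; omega
        have hPc : pairSet P = ({a, b} : Finset ℕ) := hP
        have hRc : pairSet R = ({c, b} : Finset ℕ) := by
          rw [hR]; exact Finset.pair_comm b c
        simp only [Xgen, if_pos hQ', if_neg hP', if_neg hR', SemidirectProduct.mul_left,
          SemidirectProduct.mul_right, map_one, mul_one, one_mul, ← ofAdd_add,
          tauMon_ofAdd, tauHom_Egen, tauHom_of]
        apply of_congr
        intro k
        rw [sigF_dvec_half n i j hi hij hj P a b (by omega) (by omega) (by omega) hPc k,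
          sigF_dvec_half n i j hi hij hj R c b (by omega) (by omega) (by omega) hRc k]
      · by_cases hR' : pairSet R = ({i, j} : Finset ℕ)
        · have h1 : ({b, c} : Finset ℕ) = {i, j} := hR.symm.trans hR'
          rw [pair_eq_iff] at h1
          have hPc : pairSet P = ({b, a} : Finset ℕ) := by
            rw [hP]; exact Finset.pair_comm a b
          have hQc : pairSet Q = ({c, a} : Finset ℕ) := by
            rw [hQ]; exact Finset.pair_comm a c
          simp only [Xgen, if_pos hR', if_neg hP', if_neg hQ', SemidirectProduct.mul_left,
            SemidirectProduct.mul_right, map_one, mul_one, one_mul, ← ofAdd_add,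
            tauMon_ofAdd, tauHom_Egen, tauHom_of]
          unfold Egen
          apply of_congr
          intro k
          simp only [Pi.zero_apply]
          rw [sigF_add,
            sigF_dvec_half n i j hi hij hj P b a (by omega) (by omega) (by omega) hPc k,
            sigF_dvec_half n i j hi hij hj Q c a (by omega) (by omega) (by omega) hQc k]
          split_ifs <;> decide
        · simp [Xgen, if_neg hP', if_neg hQ', if_neg hR', SemidirectProduct.mul_left]
  · simp only [Xgen, SemidirectProduct.mul_right, ← ofAdd_add]
    congr 1
    abel

/-- The homomorphism `G_n^2 →* F2 ⋊ states` tracking the invariant `w2`. -/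
def phiH (hi : 1 ≤ i) (hij : i < j) (hj : j ≤ n) : G2 n →* Hgrp n i j :=
  PresentedGroup.toGroup (f := Xgen n i j) (by
    rintro r ((⟨a, rfl⟩ | ⟨a, b, c, d, ha1, ha2, hb1, hb2, hc1, hc2, hd1, hd2,
        hab, hac, had, hbc, hbd, hcd, rfl⟩) |
      ⟨a, b, c, ha1, ha2, hb1, hb2, hc1, hc2, hab, hac, hbc, rfl⟩)
    · simp only [map_mul, FreeGroup.lift_apply_of]
      exact Xsq n i j hi hij hj a
    · have hp : P2ok n (sort2 a b) := sort2_ok n ha1 ha2 hb1 hb2 hab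
      have hq : P2ok n (sort2 c d) := sort2_ok n hc1 hc2 hd1 hd2 hcd
      simp only [fgen2, dif_pos hp, dif_pos hq, map_mul, map_inv, FreeGroup.lift_apply_of]
      exact Xcomm n i j hi hij hj _ _ (by
        rw [pairSet_sort n hp, pairSet_sort n hq]
        intro x hx hx2
        simp only [Finset.mem_insert, Finset.mem_singleton] at hx hx2
        omega)
    · have hp : P2ok n (sort2 a b) := sort2_ok n ha1 ha2 hb1 hb2 hab
      have hq : P2ok n (sort2 a c) := sort2_ok n ha1 ha2 hc1 hc2 hac
      have hr : P2ok n (sort2 b c) := sort2_ok n hb1 hb2 hc1 hc2 hbc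
      simp only [fgen2, dif_pos hp, dif_pos hq, dif_pos hr, map_mul, map_inv,
        FreeGroup.lift_apply_of]
      rw [Xtriangle n i j hi hij hj a b c hab hac hbc _ _ _
        (pairSet_sort n hp) (pairSet_sort n hq) (pairSet_sort n hr)]
      group)

/-- The parity state of a word. -/
def stateV (β : List (PIdx n)) : PIdx n → ZMod 2 := fun p => ((β.count p : ℕ) : ZMod 2)

lemma stateV_append (β : List (PIdx n)) (a : PIdx n) :
    stateV n (β ++ [a]) = stateV n β + dvec n a := by
  funext p
  simp only [stateV, dvec, Pi.add_apply, List.count_append]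
  push_cast
  congr 1
  simp only [List.count_singleton, beq_iff_eq]
  split_ifs with h1 h2 h3 <;> simp_all

lemma cnt2_count {a k : ℕ} (h : P2ok n (sort2 a k)) (β : List (PIdx n)) :
    cnt2 β a k = β.count (⟨sort2 a k, h⟩ : PIdx n) := by
  unfold cnt2
  rw [List.count_eq_countP, ← List.countP_eq_length_filter]
  apply List.countP_congr
  intro x _
  have he : (pairSet x = ({a, k} : Finset ℕ)) ↔ x = ⟨sort2 a k, h⟩ := by
    rw [pairSet_eq_iff]
    exact ⟨fun h2 => Subtype.ext h2, fun h2 => by rw [h2]⟩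
  simp [he]
  exact Subtype.ext_iff

lemma iC2_eq (hi : 1 ≤ i) (hij : i < j) (hj : j ≤ n) (β : List (PIdx n))
    (k : SIdx2 n i j) :
    iC2 i j β k = sigF n i j (stateV n β) k.1 := by
  obtain ⟨⟨hk1, hk2⟩, hki, hkj⟩ := k.2
  have h1 : P2ok n (sort2 i k.1) :=
    sort2_ok n hi (le_trans (le_of_lt hij) hj) hk1 hk2 (fun h => hki h.symm)
  have h2 : P2ok n (sort2 j k.1) :=
    sort2_ok n (by omega) hj hk1 hk2 (fun h => hkj h.symm)
  unfold iC2 sigF stateV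
  rw [dif_pos h1, dif_pos h2, cnt2_count n h1 β, cnt2_count n h2 β]
  push_cast
  ring

lemma w2_append (β : List (PIdx n)) (a : PIdx n) :
    w2 i j (β ++ [a]) = w2 i j β *
      (if pairSet a = ({i, j} : Finset ℕ) then
        (PresentedGroup.of (iC2 i j β) : F2 n i j) else 1) := by
  unfold w2
  rw [List.length_append, List.length_singleton, List.range_succ,
    List.zip_append (by simp), List.filter_append, List.map_append, List.prod_append]
  congr 1
  · have hmap : ∀ x ∈ (((List.range β.length).zip β).filter fun x => decide (pairSet x.2 = ({i, j} : Finset ℕ))),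
        (PresentedGroup.of (iC2 i j ((β ++ [a]).take x.1)) : F2 n i j) =
        PresentedGroup.of (iC2 i j (β.take x.1)) := by
      intro x hx
      have hx' : x ∈ (List.range β.length).zip β := List.mem_of_mem_filter hx
      have hlt : x.1 < β.length := by
        exact List.mem_range.1 (List.of_mem_zip hx').1
      rw [List.take_append_of_le_length (le_of_lt hlt)]
    exact congrArg List.prod (List.map_congr_left hmap)
  · show ((([(β.length, a)]).filter fun x => decide (pairSet x.2 = ({i, j} : Finset ℕ))).map
      fun x => (PresentedGroup.of (iC2 i j ((β ++ [a]).take x.1)) : F2 n i j)).prod = _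
    by_cases h : pairSet a = ({i, j} : Finset ℕ)
    · rw [if_pos h]
      simp [List.filter, h, List.take_left]
    · rw [if_neg h]
      simp [List.filter, h]

lemma phiH_word (hi : 1 ≤ i) (hij : i < j) (hj : j ≤ n) (β : List (PIdx n)) :
    phiH n i j hi hij hj (toG2 β) =
      ⟨w2 i j β, Multiplicative.ofAdd (stateV n β)⟩ := by
  induction β using List.reverseRecOn with
  | nil =>
    have h1 : toG2 ([] : List (PIdx n)) = 1 := rfl
    have h2 : w2 i j ([] : List (PIdx n)) = 1 := rfl
    have h3 : stateV n ([] : List (PIdx n)) = 0 := by funext p; simp [stateV]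
    rw [h1, map_one, h2, h3]
    rfl
  | append_singleton β a ih =>
    have h1 : toG2 (β ++ [a]) = toG2 β * PresentedGroup.of a := by
      unfold toG2; rw [List.map_append, List.prod_append]; simp
    have h2 : phiH n i j hi hij hj (PresentedGroup.of a) = Xgen n i j a :=
      PresentedGroup.toGroup.of _
    rw [h1, map_mul, ih, h2, w2_append n i j β a, stateV_append n β a]
    apply SemidirectProduct.ext
    · simp only [Xgen, SemidirectProduct.mul_left, tauMon_ofAdd]
      by_cases h : pairSet a = ({i, j} : Finset ℕ)
      · have he : (fun k : SIdx2 n i j => sigF n i j (stateV n β) k.1) = iC2 i j β := by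
          funext k
          exact (iC2_eq n i j hi hij hj β k).symm
        rw [if_pos h, if_pos h, tauHom_Egen, he]
      · rw [if_neg h, if_neg h, map_one]
    · simp only [Xgen, SemidirectProduct.mul_right, ← ofAdd_add]

end Statement7Aux

theorem statement_7 (n i j : ℕ) (hn : 3 ≤ n)
    (hi : 1 ≤ i) (hij : i < j) (hj : j ≤ n)
    (β β' : List (PIdx n)) (hg : good2 β) (hg' : good2 β')
    (h : toG2 β = toG2 β') :
    w2 i j β = w2 i j β' := by
  have h2 := congrArg (phiH n i j hi hij hj) h
  rw [phiH_word n i j hi hij hj β, phiH_word n i j hi hij hj β'] at h2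
  simpa using congrArg SemidirectProduct.left h2

end GnkBrunnian
end

section
/- Fix n ≥ 3. If β and β′ are words in the generators of G_{n+1}^3 representing the same element of G_{n+1}^3, then f(β) = f(β′) in G_{n,p}^3. In other words, f : G_{n+1}^3 → G_{n,p}^3 is well defined. -/
namespace GnkBrunnian

namespace WD

lemma finpair_eq_iff {a b c d : ℕ} :
    ({a, b} : Finset ℕ) = {c, d} ↔ (a = c ∧ b = d) ∨ (a = d ∧ b = c) := by
  constructor
  · intro h
    have h' := Finset.ext_iff.1 h
    simp only [Finset.mem_insert, Finset.mem_singleton] at h'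
    have h1 := h' a; have h2 := h' b; have h3 := h' c; have h4 := h' d
    omega
  · rintro (⟨rfl, rfl⟩ | ⟨rfl, rfl⟩)
    · rfl
    · exact Finset.pair_comm a b

lemma fintrip_top_iff {x y p q m : ℕ} (hx : x ≠ m) (hy : y ≠ m) (hp : p ≠ m) (hq : q ≠ m) :
    ({x, y, m} : Finset ℕ) = {p, q, m} ↔ ({x, y} : Finset ℕ) = {p, q} := by
  constructor
  · intro h
    have h' := Finset.ext_iff.1 h
    simp only [Finset.mem_insert, Finset.mem_singleton] at h'
    ext t
    simp only [Finset.mem_insert, Finset.mem_singleton]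
    have := h' t
    omega
  · intro h
    have h' := Finset.ext_iff.1 h
    simp only [Finset.mem_insert, Finset.mem_singleton] at h'
    ext t
    simp only [Finset.mem_insert, Finset.mem_singleton]
    have := h' t
    omega

lemma trip_swap23 (a b c : ℕ) : ({a, b, c} : Finset ℕ) = {a, c, b} := by
  ext t; simp only [Finset.mem_insert, Finset.mem_singleton]; tauto

lemma trip_swap12 (a b c : ℕ) : ({a, b, c} : Finset ℕ) = {b, a, c} := by
  ext t; simp only [Finset.mem_insert, Finset.mem_singleton]; tauto

lemma sort3_swap12 (a b c : ℕ) : GnkBrunnian.sort3 a b c = GnkBrunnian.sort3 b a c := by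
  unfold GnkBrunnian.sort3
  rw [Prod.mk.injEq, Prod.mk.injEq]
  refine ⟨by omega, by omega, by omega⟩

lemma sort3_swap23 (a b c : ℕ) : GnkBrunnian.sort3 a b c = GnkBrunnian.sort3 a c b := by
  unfold GnkBrunnian.sort3
  rw [Prod.mk.injEq, Prod.mk.injEq]
  refine ⟨by omega, by omega, by omega⟩

lemma sort3_sorted {a b c : ℕ} (h1 : a < b) (h2 : b < c) : GnkBrunnian.sort3 a b c = (a, b, c) := by
  unfold GnkBrunnian.sort3
  rw [Prod.mk.injEq, Prod.mk.injEq]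
  refine ⟨by omega, by omega, by omega⟩

lemma T3ok_sort3 {N a b c : ℕ} (h1 : 1 ≤ a) (h2 : 1 ≤ b) (h3 : 1 ≤ c)
    (ha : a ≤ N) (hb : b ≤ N) (hc : c ≤ N)
    (hab : a ≠ b) (hac : a ≠ c) (hbc : b ≠ c) : GnkBrunnian.T3ok N (GnkBrunnian.sort3 a b c) := by
  unfold GnkBrunnian.sort3 GnkBrunnian.T3ok
  refine ⟨?_, ?_, ?_, ?_⟩ <;> dsimp only <;> omega

lemma sort3_facts (x y z : ℕ) :
    ((GnkBrunnian.sort3 x y z).1 = x ∨ (GnkBrunnian.sort3 x y z).1 = y ∨ (GnkBrunnian.sort3 x y z).1 = z) ∧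
    ((GnkBrunnian.sort3 x y z).2.1 = x ∨ (GnkBrunnian.sort3 x y z).2.1 = y ∨ (GnkBrunnian.sort3 x y z).2.1 = z) ∧
    ((GnkBrunnian.sort3 x y z).2.2 = x ∨ (GnkBrunnian.sort3 x y z).2.2 = y ∨ (GnkBrunnian.sort3 x y z).2.2 = z) := by
  unfold GnkBrunnian.sort3
  refine ⟨by simp only; omega, by simp only; omega, by simp only; omega⟩

lemma tripSet_sort3 {N : ℕ} {a b c : ℕ} (h : GnkBrunnian.T3ok N (GnkBrunnian.sort3 a b c)) :
    GnkBrunnian.tripSet (⟨GnkBrunnian.sort3 a b c, h⟩ : GnkBrunnian.TIdx N) = {a, b, c} := by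
  ext t
  simp only [GnkBrunnian.tripSet, GnkBrunnian.sort3, Finset.mem_insert, Finset.mem_singleton]
  omega

lemma fgen3_eq {N a b c : ℕ} (h : GnkBrunnian.T3ok N (GnkBrunnian.sort3 a b c)) :
    GnkBrunnian.fgen3 N a b c = FreeGroup.of (⟨GnkBrunnian.sort3 a b c, h⟩ : GnkBrunnian.TIdx N) := by
  unfold GnkBrunnian.fgen3
  rw [dif_pos h]

lemma fgenP3_eq {N a b c : ℕ} (e : ZMod 2) (h : GnkBrunnian.T3ok N (GnkBrunnian.sort3 a b c)) :
    GnkBrunnian.fgenP3 N a b c e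
      = FreeGroup.of ((⟨GnkBrunnian.sort3 a b c, h⟩ : GnkBrunnian.TIdx N), e) := by
  unfold GnkBrunnian.fgenP3
  rw [dif_pos h]

end WD
namespace WD
open GnkBrunnian

variable {n : ℕ}

lemma relP3_eq_one {r : FreeGroup (TPIdx n)} (hr : r ∈ relsP3 n) :
    (PresentedGroup.mk (relsP3 n) r : GP3 n) = 1 := by
  have : r ∈ Subgroup.normalClosure (relsP3 n) := Subgroup.subset_normalClosure hr
  exact (QuotientGroup.eq_one_iff r).2 this

lemma gp3_sq (a : TPIdx n) : (PresentedGroup.of a : GP3 n) * PresentedGroup.of a = 1 := by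
  have : (PresentedGroup.of a : GP3 n) * PresentedGroup.of a
      = PresentedGroup.mk (relsP3 n) (FreeGroup.of a * FreeGroup.of a) := by
    rw [map_mul]; rfl
  rw [this]
  exact relP3_eq_one (Or.inl (Or.inl ⟨a, rfl⟩))

lemma gp3_inv (a : TPIdx n) : (PresentedGroup.of a : GP3 n)⁻¹ = PresentedGroup.of a :=
  inv_eq_of_mul_eq_one_left (gp3_sq a)

lemma gp3_comm {a b : TPIdx n} (h : (tripSet a.1 ∩ tripSet b.1).card < 2) :
    (PresentedGroup.of a : GP3 n) * PresentedGroup.of b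
      = PresentedGroup.of b * PresentedGroup.of a := by
  have hsq : ((PresentedGroup.of a : GP3 n) * PresentedGroup.of b) ^ 2 = 1 := by
    have : ((PresentedGroup.of a : GP3 n) * PresentedGroup.of b) ^ 2
        = PresentedGroup.mk (relsP3 n) ((FreeGroup.of a * FreeGroup.of b) ^ 2) := by
      rw [map_pow, map_mul]; rfl
    rw [this]
    exact relP3_eq_one (Or.inl (Or.inr ⟨a, b, h, rfl⟩))
  have h1 : (PresentedGroup.of a : GP3 n) * PresentedGroup.of b
      = ((PresentedGroup.of a : GP3 n) * PresentedGroup.of b)⁻¹ := by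
    rw [eq_inv_iff_mul_eq_one, ← sq, hsq]
  rw [h1, mul_inv_rev, gp3_inv, gp3_inv]

/-! The twist -/

abbrev Vty : Type := (ℕ × ℕ) → ZMod 2

def twIdx (v : Vty) (a : TPIdx n) : TPIdx n :=
  (a.1, a.2 + v (a.1.1.2.1, a.1.1.2.2) + v (a.1.1.1, a.1.1.2.2))

lemma twIdx_add (v w : Vty) (a : TPIdx n) : twIdx (v + w) a = twIdx v (twIdx w a) := by
  unfold twIdx
  refine Prod.ext rfl ?_
  show a.2 + (v + w) _ + (v + w) _ = a.2 + w _ + w _ + v _ + v _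
  simp only [Pi.add_apply]
  ring

lemma twIdx_zero (a : TPIdx n) : twIdx 0 a = a := by
  unfold twIdx
  refine Prod.ext rfl ?_
  show a.2 + 0 + 0 = a.2
  simp

lemma pair_min_max (v : Vty) (a b c : ℕ) :
    v (min a b, c) + v (max a b, c) = v (a, c) + v (b, c) := by
  rcases le_total a b with h | h
  · rw [min_eq_left h, max_eq_right h]
  · rw [min_eq_right h, max_eq_left h, add_comm]

lemma tw_fgenP3 {N a b c : ℕ} (v : Vty) (e : ZMod 2) (h : T3ok N (sort3 a b c)) :
    FreeGroup.map (twIdx v) (fgenP3 N a b c e)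
      = fgenP3 N a b c (e + v ((sort3 a b c).2.1, (sort3 a b c).2.2)
          + v ((sort3 a b c).1, (sort3 a b c).2.2)) := by
  rw [fgenP3_eq e h, fgenP3_eq _ h, FreeGroup.map.of]
  rfl

lemma sort3_max_last {a b c : ℕ} (ha : a < c) (hb : b < c) :
    sort3 a b c = (min a b, max a b, c) := by
  unfold sort3
  rw [Prod.mk.injEq, Prod.mk.injEq]
  refine ⟨by omega, by omega, by omega⟩

/-- The sum of the two twist values for a triple whose maximum is `c`. -/
lemma tw_sum (v : Vty) {a b c : ℕ} (ha : a < c) (hb : b < c) :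
    v ((sort3 a b c).2.1, (sort3 a b c).2.2) + v ((sort3 a b c).1, (sort3 a b c).2.2)
      = v (a, c) + v (b, c) := by
  rw [sort3_max_last ha hb]
  show v (max a b, c) + v (min a b, c) = _
  rw [add_comm, pair_min_max]

lemma mapRels (v : Vty) {r : FreeGroup (TPIdx n)} (hr : r ∈ relsP3 n) :
    FreeGroup.map (twIdx v) r ∈ relsP3 n := by
  rcases hr with (⟨a, rfl⟩ | ⟨a, b, hcard, rfl⟩) | ⟨i, j, k, l, ei, ej, ek, el,
    hi1, hi2, hj1, hj2, hk1, hk2, hl1, hl2, hij, hik, hil, hjk, hjl, hkl, hcond, rfl⟩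
  · exact Or.inl (Or.inl ⟨twIdx v a, by rw [map_mul, FreeGroup.map.of]⟩)
  · refine Or.inl (Or.inr ⟨twIdx v a, twIdx v b, hcard, ?_⟩)
    rw [map_pow, map_mul, FreeGroup.map.of, FreeGroup.map.of]
  · have hijk : T3ok n (sort3 i j k) := T3ok_sort3 hi1 hj1 hk1 hi2 hj2 hk2 hij hik hjk
    have hijl : T3ok n (sort3 i j l) := T3ok_sort3 hi1 hj1 hl1 hi2 hj2 hl2 hij hil hjl
    have hikl : T3ok n (sort3 i k l) := T3ok_sort3 hi1 hk1 hl1 hi2 hk2 hl2 hik hil hkl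
    have hjkl : T3ok n (sort3 j k l) := T3ok_sort3 hj1 hk1 hl1 hj2 hk2 hl2 hjk hjl hkl
    set Aijk := v ((sort3 i j k).2.1, (sort3 i j k).2.2) + v ((sort3 i j k).1, (sort3 i j k).2.2)
      with hAijk
    set Aijl := v ((sort3 i j l).2.1, (sort3 i j l).2.2) + v ((sort3 i j l).1, (sort3 i j l).2.2)
      with hAijl
    set Aikl := v ((sort3 i k l).2.1, (sort3 i k l).2.2) + v ((sort3 i k l).1, (sort3 i k l).2.2)
      with hAikl
    set Ajkl := v ((sort3 j k l).2.1, (sort3 j k l).2.2) + v ((sort3 j k l).1, (sort3 j k l).2.2)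
      with hAjkl
    refine Or.inr ⟨i, j, k, l, ei + Ajkl, ej + Aikl, ek + Aijl, el + Aijk,
      hi1, hi2, hj1, hj2, hk1, hk2, hl1, hl2, hij, hik, hil, hjk, hjl, hkl, ?_, ?_⟩
    · -- parity condition
      by_cases hMi : max (max i j) (max k l) = i
      · rw [if_pos hMi] at hcond ⊢
        have hji : j < i := by omega
        have hki : k < i := by omega
        have hli : l < i := by omega
        have e1 : Aikl = v (k, i) + v (l, i) := by
          rw [hAikl, sort3_swap12 i k l, sort3_swap23 k i l, tw_sum v hki hli]
        have e2 : Aijl = v (j, i) + v (l, i) := by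
          rw [hAijl, sort3_swap12 i j l, sort3_swap23 j i l, tw_sum v hji hli]
        have e3 : Aijk = v (j, i) + v (k, i) := by
          rw [hAijk, sort3_swap12 i j k, sort3_swap23 j i k, tw_sum v hji hki]
        rw [e1, e2, e3]
        have : ∀ p q r e1 e2 e3 : ZMod 2, e1 + e2 + e3 = 0 →
            e1 + (p + q) + (e2 + (r + q)) + (e3 + (r + p)) = 0 := by decide
        exact this _ _ _ _ _ _ hcond
      · by_cases hMj : max (max i j) (max k l) = j
        · rw [if_neg hMi, if_pos hMj] at hcond ⊢
          have hij' : i < j := by omega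
          have hkj : k < j := by omega
          have hlj : l < j := by omega
          have e1 : Ajkl = v (k, j) + v (l, j) := by
            rw [hAjkl, sort3_swap12 j k l, sort3_swap23 k j l, tw_sum v hkj hlj]
          have e2 : Aijl = v (i, j) + v (l, j) := by
            rw [hAijl, sort3_swap23 i j l, tw_sum v hij' hlj]
          have e3 : Aijk = v (i, j) + v (k, j) := by
            rw [hAijk, sort3_swap23 i j k, tw_sum v hij' hkj]
          rw [e1, e2, e3]
          have : ∀ p q r e1 e2 e3 : ZMod 2, e1 + e2 + e3 = 0 →
              e1 + (p + q) + (e2 + (r + q)) + (e3 + (r + p)) = 0 := by decide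
          exact this _ _ _ _ _ _ hcond
        · by_cases hMk : max (max i j) (max k l) = k
          · rw [if_neg hMi, if_neg hMj, if_pos hMk] at hcond ⊢
            have hik' : i < k := by omega
            have hjk' : j < k := by omega
            have hlk : l < k := by omega
            have e1 : Ajkl = v (j, k) + v (l, k) := by
              rw [hAjkl, sort3_swap23 j k l, tw_sum v hjk' hlk]
            have e2 : Aikl = v (i, k) + v (l, k) := by
              rw [hAikl, sort3_swap23 i k l, tw_sum v hik' hlk]
            have e3 : Aijk = v (i, k) + v (j, k) := by
              rw [hAijk, tw_sum v hik' hjk']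
            rw [e1, e2, e3]
            have : ∀ p q r e1 e2 e3 : ZMod 2, e1 + e2 + e3 = 0 →
                e1 + (p + q) + (e2 + (r + q)) + (e3 + (r + p)) = 0 := by decide
            exact this _ _ _ _ _ _ hcond
          · rw [if_neg hMi, if_neg hMj, if_neg hMk] at hcond ⊢
            have hil' : i < l := by omega
            have hjl' : j < l := by omega
            have hkl' : k < l := by omega
            have e1 : Ajkl = v (j, l) + v (k, l) := by
              rw [hAjkl, tw_sum v hjl' hkl']
            have e2 : Aikl = v (i, l) + v (k, l) := by
              rw [hAikl, tw_sum v hil' hkl']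
            have e3 : Aijl = v (i, l) + v (j, l) := by
              rw [hAijl, tw_sum v hil' hjl']
            rw [e1, e2, e3]
            have : ∀ p q r e1 e2 e3 : ZMod 2, e1 + e2 + e3 = 0 →
                e1 + (p + q) + (e2 + (r + q)) + (e3 + (r + p)) = 0 := by decide
            exact this _ _ _ _ _ _ hcond
    · rw [map_pow, map_mul, map_mul, map_mul,
        tw_fgenP3 v el hijk, tw_fgenP3 v ek hijl, tw_fgenP3 v ej hikl, tw_fgenP3 v ei hjkl]
      rw [hAijk, hAijl, hAikl, hAjkl]
      simp only [add_assoc]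

end WD
namespace WD
open GnkBrunnian

variable {n : ℕ}

lemma lift_eq_mk_map (v : Vty) :
    (FreeGroup.lift fun a : TPIdx n => (PresentedGroup.of (twIdx v a) : GP3 n))
      = (PresentedGroup.mk (relsP3 n)).comp (FreeGroup.map (twIdx v)) := by
  apply FreeGroup.ext_hom
  intro a
  simp only [FreeGroup.lift_apply_of, MonoidHom.comp_apply, FreeGroup.map.of]
  rfl

/-- The twist as an endomorphism of `G_{n,p}^3`. -/
def twHom (v : Vty) : GP3 n →* GP3 n :=
  PresentedGroup.toGroup (f := fun a => PresentedGroup.of (twIdx v a)) (by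
    intro r hr
    rw [lift_eq_mk_map, MonoidHom.comp_apply]
    exact relP3_eq_one (mapRels v hr))

lemma twHom_of (v : Vty) (a : TPIdx n) :
    twHom (n := n) v (PresentedGroup.of a) = PresentedGroup.of (twIdx v a) :=
  PresentedGroup.toGroup.of _

lemma twHom_comp (v w : Vty) :
    (twHom (n := n) v).comp (twHom w) = twHom (v + w) := by
  apply PresentedGroup.ext
  intro a
  simp only [MonoidHom.comp_apply, twHom_of, twIdx_add]

lemma twHom_zero : twHom (n := n) 0 = MonoidHom.id _ := by
  apply PresentedGroup.ext
  intro a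
  simp only [twHom_of, twIdx_zero, MonoidHom.id_apply]

lemma vty_add_self (v : Vty) : v + v = 0 := by
  funext p
  simp only [Pi.add_apply, Pi.zero_apply]
  exact (by decide : ∀ x : ZMod 2, x + x = 0) _

/-- The twist as an automorphism of `G_{n,p}^3`. -/
def twAut (v : Vty) : MulAut (GP3 n) :=
  MonoidHom.toMulEquiv (twHom v) (twHom v)
    (by rw [twHom_comp, vty_add_self, twHom_zero])
    (by rw [twHom_comp, vty_add_self, twHom_zero])

/-- The action of parities on `G_{n,p}^3`. -/
def phiV : Multiplicative Vty →* MulAut (GP3 n) :=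
  MonoidHom.mk' (fun v => twAut v.toAdd) (by
    intro a b
    apply MulEquiv.ext
    intro x
    show twHom _ x = (twHom _) (twHom _ x)
    rw [← MonoidHom.comp_apply, twHom_comp]
    rfl)

/-- The ambient semidirect product. -/
abbrev Wgrp (n : ℕ) := SemidirectProduct (GP3 n) (Multiplicative Vty) (phiV)

lemma phiV_of (v : Vty) (a : TPIdx n) :
    (phiV (Multiplicative.ofAdd v) : MulAut (GP3 n)) (PresentedGroup.of a)
      = PresentedGroup.of (twIdx v a) := twHom_of v a

/-- The parity vector of a letter of `G_{n+1}^3`. -/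
def dl (a : TIdx (n + 1)) : Vty :=
  fun p => if tripSet a = ({p.1, p.2, n + 1} : Finset ℕ) then 1 else 0

/-- The image of a letter of `G_{n+1}^3` in the semidirect product. -/
def Lmap (a : TIdx (n + 1)) : Wgrp n :=
  if h : a.1.2.2 = n + 1 then SemidirectProduct.inr (Multiplicative.ofAdd (dl a))
  else SemidirectProduct.inl (PresentedGroup.of
    (⟨a.1, a.2.1, a.2.2.1, a.2.2.2.1, by have := a.2.2.2.2; omega⟩, 0))

def Fhom : FreeGroup (TIdx (n + 1)) →* Wgrp n := FreeGroup.lift Lmap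

lemma inr_ofAdd_sq (v : Vty) :
    (SemidirectProduct.inr (Multiplicative.ofAdd v) : Wgrp n)
      * SemidirectProduct.inr (Multiplicative.ofAdd v) = 1 := by
  rw [← map_mul, ← ofAdd_add, vty_add_self]
  rfl

lemma L_sq (a : TIdx (n + 1)) : Lmap (n := n) a * Lmap a = 1 := by
  unfold Lmap
  split_ifs with h
  · exact inr_ofAdd_sq _
  · rw [← map_mul, gp3_sq, map_one]

lemma L_inv (a : TIdx (n + 1)) : (Lmap (n := n) a)⁻¹ = Lmap a :=
  inv_eq_of_mul_eq_one_left (L_sq a)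

/-- Every element of the parity group is an involution. -/
lemma multvty_sq (u : Multiplicative Vty) : u * u = 1 := by
  have h2 : Multiplicative.toAdd u + Multiplicative.toAdd u = 0 := vty_add_self _
  calc u * u = Multiplicative.ofAdd (Multiplicative.toAdd u + Multiplicative.toAdd u) := rfl
    _ = 1 := by rw [h2]; rfl

lemma inr_mul_inl (v : Multiplicative Vty) (x : GP3 n) :
    (SemidirectProduct.inr v : Wgrp n) * SemidirectProduct.inl x
      = SemidirectProduct.inl ((phiV v : MulAut (GP3 n)) x) * SemidirectProduct.inr v := by
  ext
  · simp [SemidirectProduct.mul_left]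
  · simp [SemidirectProduct.mul_right]

/-- Key computation: a conjugation-type product squares to 1. -/
lemma sandwich (g : GP3 n) (p q : Multiplicative Vty)
    (hg : g * g = 1) (hfix : (phiV (q * p) : MulAut (GP3 n)) g = g) :
    (SemidirectProduct.inr p * SemidirectProduct.inl g * SemidirectProduct.inr q)
      * (SemidirectProduct.inr p * SemidirectProduct.inl g * SemidirectProduct.inr q)
      = (1 : Wgrp n) := by
  calc (SemidirectProduct.inr p * SemidirectProduct.inl g * SemidirectProduct.inr q)
        * (SemidirectProduct.inr p * SemidirectProduct.inl g * SemidirectProduct.inr q)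
      = SemidirectProduct.inr p * (SemidirectProduct.inl g
          * (SemidirectProduct.inr (q * p) * SemidirectProduct.inl g))
          * SemidirectProduct.inr q := by rw [map_mul]; group
    _ = SemidirectProduct.inr p * (SemidirectProduct.inl g
          * (SemidirectProduct.inl ((phiV (q * p) : MulAut (GP3 n)) g)
            * SemidirectProduct.inr (q * p)))
          * SemidirectProduct.inr q := by rw [inr_mul_inl]
    _ = SemidirectProduct.inr p * (SemidirectProduct.inl (g * g)
          * SemidirectProduct.inr (q * p)) * SemidirectProduct.inr q := by
          rw [hfix, ← mul_assoc (SemidirectProduct.inl g) (SemidirectProduct.inl g), ← map_mul]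
    _ = SemidirectProduct.inr p * SemidirectProduct.inr (q * p)
          * SemidirectProduct.inr q := by rw [hg, map_one, one_mul]
    _ = SemidirectProduct.inr ((p * q) * (p * q)) := by rw [← map_mul, ← map_mul]; congr 1; group
    _ = 1 := by rw [multvty_sq, map_one]

end WD
namespace WD
open GnkBrunnian

variable {n : ℕ}

lemma core1 {x y z P Q : ℕ} (hxy : x ≠ y) (hxz : x ≠ z) (hyz : y ≠ z) (hPQ : P ≠ Q)
    (hP : P = x ∨ P = y ∨ P = z) (hQ : Q = x ∨ Q = y ∨ Q = z) :
    (if ({x, y} : Finset ℕ) = {P, Q} then (1 : ZMod 2) else 0)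
      + (if ({x, z} : Finset ℕ) = {P, Q} then 1 else 0)
      + (if ({y, z} : Finset ℕ) = {P, Q} then 1 else 0) = 1 := by
  simp only [finpair_eq_iff]
  split_ifs <;> first | decide | (exfalso; omega)

lemma dl_eval {a : TIdx (n + 1)} {x y P Q : ℕ}
    (hts : tripSet a = ({x, y, n + 1} : Finset ℕ))
    (hx : x ≠ n + 1) (hy : y ≠ n + 1) (hP : P ≠ n + 1) (hQ : Q ≠ n + 1) :
    dl a (P, Q) = if ({x, y} : Finset ℕ) = {P, Q} then (1 : ZMod 2) else 0 := by
  show (if tripSet a = ({P, Q, n + 1} : Finset ℕ) then (1 : ZMod 2) else 0) = _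
  rw [hts]
  exact if_congr (fintrip_top_iff hx hy hP hQ) rfl rfl

lemma dl_zero_of_far {a b : TIdx (n + 1)} (hcard : (tripSet a ∩ tripSet b).card < 2)
    {P Q : ℕ} (hP : P ∈ tripSet b) (hQ : Q ∈ tripSet b) (hPQ : P ≠ Q) :
    dl a (P, Q) = 0 := by
  show (if tripSet a = ({P, Q, n + 1} : Finset ℕ) then (1 : ZMod 2) else 0) = 0
  rw [if_neg]
  intro h
  have hPa : P ∈ tripSet a := by rw [h]; simp
  have hQa : Q ∈ tripSet a := by rw [h]; simp
  have hsub : ({P, Q} : Finset ℕ) ⊆ tripSet a ∩ tripSet b := by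
    simp [Finset.insert_subset_iff, Finset.mem_inter, hPa, hQa, hP, hQ]
  have hle := Finset.card_le_card hsub
  rw [Finset.card_pair hPQ] at hle
  omega

lemma Lmap_top {a : TIdx (n + 1)} (h : a.1.2.2 = n + 1) :
    Lmap (n := n) a = SemidirectProduct.inr (Multiplicative.ofAdd (dl a)) := dif_pos h

lemma Lmap_low' {a : TIdx (n + 1)} {t : ℕ × ℕ × ℕ} (hval : a.1 = t)
    (h : a.1.2.2 ≠ n + 1) (hok : T3ok n t) :
    Lmap (n := n) a = SemidirectProduct.inl (PresentedGroup.of ((⟨t, hok⟩ : TIdx n), 0)) := by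
  subst hval
  exact dif_neg h

lemma L_comm (a b : TIdx (n + 1)) (hcard : (tripSet a ∩ tripSet b).card < 2) :
    Lmap (n := n) a * Lmap b = Lmap b * Lmap a := by
  have hcard' : (tripSet b ∩ tripSet a).card < 2 := by rwa [Finset.inter_comm]
  have inrmul : ∀ u v : Multiplicative Vty,
      (SemidirectProduct.inr u : Wgrp n) * SemidirectProduct.inr v
        = SemidirectProduct.inr (u * v) := fun u v => (map_mul _ _ _).symm
  have fix : ∀ (u w : TIdx (n + 1)), u.1.2.2 = n + 1 → (hok : T3ok n w.1) →
      (hc : (tripSet u ∩ tripSet w).card < 2) →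
      twIdx (dl u) ((⟨w.1, hok⟩ : TIdx n), 0) = ((⟨w.1, hok⟩ : TIdx n), 0) := by
    intro u w _ hok hc
    unfold twIdx
    refine Prod.ext rfl ?_
    show (0 : ZMod 2) + dl u (w.1.2.1, w.1.2.2) + dl u (w.1.1, w.1.2.2) = 0
    have m1 : w.1.1 ∈ tripSet w := by simp [tripSet]
    have m2 : w.1.2.1 ∈ tripSet w := by simp [tripSet]
    have m3 : w.1.2.2 ∈ tripSet w := by simp [tripSet]
    have hw := w.2
    rw [dl_zero_of_far hc m2 m3 (by omega), dl_zero_of_far hc m1 m3 (by omega)]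
    decide
  by_cases ha : a.1.2.2 = n + 1
  · by_cases hb : b.1.2.2 = n + 1
    · rw [Lmap_top ha, Lmap_top hb, inrmul, inrmul, mul_comm]
    · have hokb : T3ok n b.1 := ⟨b.2.1, b.2.2.1, b.2.2.2.1, by have := b.2.2.2.2; omega⟩
      have h1 := inr_mul_inl (n := n) (Multiplicative.ofAdd (dl a))
        (PresentedGroup.of ((⟨b.1, hokb⟩ : TIdx n), 0))
      have h2 := phiV_of (n := n) (dl a) ((⟨b.1, hokb⟩ : TIdx n), 0)
      rw [Lmap_top ha, Lmap_low' rfl hb hokb, h1, h2, fix a b ha hokb hcard]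
  · by_cases hb : b.1.2.2 = n + 1
    · have hoka : T3ok n a.1 := ⟨a.2.1, a.2.2.1, a.2.2.2.1, by have := a.2.2.2.2; omega⟩
      have h1 := inr_mul_inl (n := n) (Multiplicative.ofAdd (dl b))
        (PresentedGroup.of ((⟨a.1, hoka⟩ : TIdx n), 0))
      have h2 := phiV_of (n := n) (dl b) ((⟨a.1, hoka⟩ : TIdx n), 0)
      rw [Lmap_low' rfl ha hoka, Lmap_top hb, h1, h2, fix b a hb hoka hcard']
    · have hoka : T3ok n a.1 := ⟨a.2.1, a.2.2.1, a.2.2.2.1, by have := a.2.2.2.2; omega⟩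
      have hokb : T3ok n b.1 := ⟨b.2.1, b.2.2.1, b.2.2.2.1, by have := b.2.2.2.2; omega⟩
      have hcard2 : (tripSet (⟨a.1, hoka⟩ : TIdx n) ∩ tripSet (⟨b.1, hokb⟩ : TIdx n)).card < 2 :=
        hcard
      have hcomm := gp3_comm (n := n) (a := ((⟨a.1, hoka⟩ : TIdx n), 0))
        (b := ((⟨b.1, hokb⟩ : TIdx n), 0)) hcard2
      rw [Lmap_low' rfl ha hoka, Lmap_low' rfl hb hokb, ← map_mul, ← map_mul, hcomm]

lemma Fhom_rel3 (A B C D : TIdx (n + 1)) :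
    Fhom (n := n) (.of A * .of B * .of C * .of D * (.of D * .of C * .of B * .of A)⁻¹)
      = (Lmap A * Lmap B * Lmap C * Lmap D) * (Lmap A * Lmap B * Lmap C * Lmap D) := by
  simp only [map_mul, map_inv, Fhom, FreeGroup.lift_apply_of]
  rw [mul_inv_rev, mul_inv_rev, mul_inv_rev, L_inv, L_inv, L_inv, L_inv]
  group

lemma gp3_tetra {i j k l : ℕ} (hi1 : 1 ≤ i) (hi2 : i ≤ n) (hj1 : 1 ≤ j) (hj2 : j ≤ n)
    (hk1 : 1 ≤ k) (hk2 : k ≤ n) (hl1 : 1 ≤ l) (hl2 : l ≤ n)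
    (hij : i ≠ j) (hik : i ≠ k) (hil : i ≠ l) (hjk : j ≠ k) (hjl : j ≠ l) (hkl : k ≠ l)
    (h1 : T3ok n (sort3 i j k)) (h2 : T3ok n (sort3 i j l))
    (h3 : T3ok n (sort3 i k l)) (h4 : T3ok n (sort3 j k l)) :
    ((PresentedGroup.of ((⟨sort3 i j k, h1⟩ : TIdx n), (0 : ZMod 2)) : GP3 n)
      * PresentedGroup.of ((⟨sort3 i j l, h2⟩ : TIdx n), 0)
      * PresentedGroup.of ((⟨sort3 i k l, h3⟩ : TIdx n), 0)
      * PresentedGroup.of ((⟨sort3 j k l, h4⟩ : TIdx n), 0))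
    * ((PresentedGroup.of ((⟨sort3 i j k, h1⟩ : TIdx n), (0 : ZMod 2)) : GP3 n)
      * PresentedGroup.of ((⟨sort3 i j l, h2⟩ : TIdx n), 0)
      * PresentedGroup.of ((⟨sort3 i k l, h3⟩ : TIdx n), 0)
      * PresentedGroup.of ((⟨sort3 j k l, h4⟩ : TIdx n), 0)) = 1 := by
  have mem : (fgenP3 n i j k 0 * fgenP3 n i j l 0 * fgenP3 n i k l 0 * fgenP3 n j k l 0) ^ 2
      ∈ relsP3 n := by
    refine Or.inr ⟨i, j, k, l, 0, 0, 0, 0, hi1, hi2, hj1, hj2, hk1, hk2, hl1, hl2,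
      hij, hik, hil, hjk, hjl, hkl, ?_, rfl⟩
    split_ifs <;> decide
  have h := relP3_eq_one mem
  rw [map_pow, map_mul, map_mul, map_mul, fgenP3_eq 0 h1, fgenP3_eq 0 h2, fgenP3_eq 0 h3,
    fgenP3_eq 0 h4] at h
  rw [← sq]
  exact h

lemma tw_fix_core {x y z : ℕ} (hxn : x ≤ n) (hyn : y ≤ n) (hzn : z ≤ n)
    (hxy : x ≠ y) (hxz : x ≠ z) (hyz : y ≠ z)
    (ht : T3ok n (sort3 x y z)) (v : Vty)
    (hv : ∀ P Q : ℕ, P ≤ n → Q ≤ n → v (P, Q) =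
      (if ({x, y} : Finset ℕ) = {P, Q} then (1 : ZMod 2) else 0)
        + (if ({x, z} : Finset ℕ) = {P, Q} then 1 else 0)
        + (if ({y, z} : Finset ℕ) = {P, Q} then 1 else 0)) :
    (phiV (Multiplicative.ofAdd v) : MulAut (GP3 n))
        (PresentedGroup.of ((⟨sort3 x y z, ht⟩ : TIdx n), (0 : ZMod 2)))
      = PresentedGroup.of ((⟨sort3 x y z, ht⟩ : TIdx n), 0) := by
  have h0 := phiV_of (n := n) v ((⟨sort3 x y z, ht⟩ : TIdx n), (0 : ZMod 2))
  rw [h0]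
  congr 1
  unfold twIdx
  refine Prod.ext rfl ?_
  show (0 : ZMod 2) + v ((sort3 x y z).2.1, (sort3 x y z).2.2)
      + v ((sort3 x y z).1, (sort3 x y z).2.2) = 0
  obtain ⟨f1, f2, f3⟩ := sort3_facts x y z
  obtain ⟨t1, t2, t3, t4⟩ := ht
  rw [hv _ _ (by omega) (by omega), hv _ _ (by omega) (by omega),
    core1 hxy hxz hyz (by omega) f2 f3, core1 hxy hxz hyz (by omega) f1 f3]
  decide

end WD
namespace WD
open GnkBrunnian

variable {n : ℕ}

set_option maxHeartbeats 3200000 in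
lemma relsKilled : ∀ r ∈ rels3 (n + 1), Fhom (n := n) r = 1 := by
  intro r hr
  rcases hr with (⟨a, rfl⟩ | ⟨a, b, hcard, rfl⟩) | ⟨i, j, k, l, hi1, hi2, hj1, hj2, hk1, hk2,
    hl1, hl2, hij, hik, hil, hjk, hjl, hkl, rfl⟩
  · simp only [map_mul, Fhom, FreeGroup.lift_apply_of]
    exact L_sq a
  · simp only [map_mul, map_inv, Fhom, FreeGroup.lift_apply_of]
    rw [L_comm a b hcard]
    group
  · have okijk : T3ok (n + 1) (sort3 i j k) := T3ok_sort3 hi1 hj1 hk1 hi2 hj2 hk2 hij hik hjk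
    have okijl : T3ok (n + 1) (sort3 i j l) := T3ok_sort3 hi1 hj1 hl1 hi2 hj2 hl2 hij hil hjl
    have okikl : T3ok (n + 1) (sort3 i k l) := T3ok_sort3 hi1 hk1 hl1 hi2 hk2 hl2 hik hil hkl
    have okjkl : T3ok (n + 1) (sort3 j k l) := T3ok_sort3 hj1 hk1 hl1 hj2 hk2 hl2 hjk hjl hkl
    rw [fgen3_eq okijk, fgen3_eq okijl, fgen3_eq okikl, fgen3_eq okjkl, Fhom_rel3]
    by_cases hltop : l = n + 1
    · subst hltop
      have hin : i ≤ n := by omega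
      have hjn : j ≤ n := by omega
      have hkn : k ≤ n := by omega
      have oklow : T3ok n (sort3 i j k) := T3ok_sort3 hi1 hj1 hk1 hin hjn hkn hij hik hjk
      rw [Lmap_low' (a := (⟨sort3 i j k, okijk⟩ : TIdx (n + 1))) (t := sort3 i j k) rfl (show max i (max j k) ≠ n + 1 by omega) oklow,
        Lmap_top (a := (⟨sort3 i j (n + 1), okijl⟩ : TIdx (n + 1))) (show max i (max j (n + 1)) = n + 1 by omega),
        Lmap_top (a := (⟨sort3 i k (n + 1), okikl⟩ : TIdx (n + 1))) (show max i (max k (n + 1)) = n + 1 by omega),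
        Lmap_top (a := (⟨sort3 j k (n + 1), okjkl⟩ : TIdx (n + 1))) (show max j (max k (n + 1)) = n + 1 by omega)]
      have hQ : SemidirectProduct.inl (PresentedGroup.of ((⟨sort3 i j k, oklow⟩ : TIdx n), (0 : ZMod 2)))
            * SemidirectProduct.inr (Multiplicative.ofAdd (dl (⟨sort3 i j (n + 1), okijl⟩ : TIdx (n + 1))))
            * SemidirectProduct.inr (Multiplicative.ofAdd (dl (⟨sort3 i k (n + 1), okikl⟩ : TIdx (n + 1))))
            * SemidirectProduct.inr (Multiplicative.ofAdd (dl (⟨sort3 j k (n + 1), okjkl⟩ : TIdx (n + 1))))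
          = (SemidirectProduct.inr ((1 : Multiplicative Vty))
            * SemidirectProduct.inl (PresentedGroup.of ((⟨sort3 i j k, oklow⟩ : TIdx n), (0 : ZMod 2)))
            * SemidirectProduct.inr (Multiplicative.ofAdd (dl (⟨sort3 i j (n + 1), okijl⟩ : TIdx (n + 1))) * (Multiplicative.ofAdd (dl (⟨sort3 i k (n + 1), okikl⟩ : TIdx (n + 1))) * Multiplicative.ofAdd (dl (⟨sort3 j k (n + 1), okjkl⟩ : TIdx (n + 1))))) : Wgrp n) := by
        rw [map_one, map_mul, map_mul]
        group
      rw [hQ]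
      refine sandwich _ _ _ (gp3_sq _) ?_
      rw [mul_one]
      have e1 : tripSet (⟨sort3 i j (n + 1), okijl⟩ : TIdx (n + 1)) = ({i, j, n + 1} : Finset ℕ) :=
        tripSet_sort3 okijl
      have e2 : tripSet (⟨sort3 i k (n + 1), okikl⟩ : TIdx (n + 1)) = ({i, k, n + 1} : Finset ℕ) :=
        tripSet_sort3 okikl
      have e3 : tripSet (⟨sort3 j k (n + 1), okjkl⟩ : TIdx (n + 1)) = ({j, k, n + 1} : Finset ℕ) :=
        tripSet_sort3 okjkl
      show (phiV (Multiplicative.ofAdd (dl (⟨sort3 i j (n + 1), okijl⟩ : TIdx (n + 1)) + (dl (⟨sort3 i k (n + 1), okikl⟩ : TIdx (n + 1)) + dl (⟨sort3 j k (n + 1), okjkl⟩ : TIdx (n + 1))))) : MulAut (GP3 n))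
          (PresentedGroup.of ((⟨sort3 i j k, oklow⟩ : TIdx n), (0 : ZMod 2))) = PresentedGroup.of ((⟨sort3 i j k, oklow⟩ : TIdx n), (0 : ZMod 2))
      refine tw_fix_core hin hjn hkn hij hik hjk oklow _ ?_
      intro P Q hP hQ2
      simp only [Pi.add_apply]
      rw [dl_eval e1 (by omega) (by omega) (by omega) (by omega),
        dl_eval e2 (by omega) (by omega) (by omega) (by omega),
        dl_eval e3 (by omega) (by omega) (by omega) (by omega)]
      ring
    · by_cases hktop : k = n + 1
      · subst hktop
        have hin : i ≤ n := by omega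
        have hjn : j ≤ n := by omega
        have hln : l ≤ n := by omega
        have oklow : T3ok n (sort3 i j l) := T3ok_sort3 hi1 hj1 hl1 hin hjn hln hij hil hjl
        rw [Lmap_top (a := (⟨sort3 i j (n + 1), okijk⟩ : TIdx (n + 1))) (show max i (max j (n + 1)) = n + 1 by omega),
          Lmap_low' (a := (⟨sort3 i j l, okijl⟩ : TIdx (n + 1))) (t := sort3 i j l) rfl (show max i (max j l) ≠ n + 1 by omega) oklow,
          Lmap_top (a := (⟨sort3 i (n + 1) l, okikl⟩ : TIdx (n + 1))) (show max i (max (n + 1) l) = n + 1 by omega),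
          Lmap_top (a := (⟨sort3 j (n + 1) l, okjkl⟩ : TIdx (n + 1))) (show max j (max (n + 1) l) = n + 1 by omega)]
        have hQ : SemidirectProduct.inr (Multiplicative.ofAdd (dl (⟨sort3 i j (n + 1), okijk⟩ : TIdx (n + 1))))
              * SemidirectProduct.inl (PresentedGroup.of ((⟨sort3 i j l, oklow⟩ : TIdx n), (0 : ZMod 2)))
              * SemidirectProduct.inr (Multiplicative.ofAdd (dl (⟨sort3 i (n + 1) l, okikl⟩ : TIdx (n + 1))))
              * SemidirectProduct.inr (Multiplicative.ofAdd (dl (⟨sort3 j (n + 1) l, okjkl⟩ : TIdx (n + 1))))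
            = (SemidirectProduct.inr (Multiplicative.ofAdd (dl (⟨sort3 i j (n + 1), okijk⟩ : TIdx (n + 1))))
              * SemidirectProduct.inl (PresentedGroup.of ((⟨sort3 i j l, oklow⟩ : TIdx n), (0 : ZMod 2)))
              * SemidirectProduct.inr (Multiplicative.ofAdd (dl (⟨sort3 i (n + 1) l, okikl⟩ : TIdx (n + 1))) * Multiplicative.ofAdd (dl (⟨sort3 j (n + 1) l, okjkl⟩ : TIdx (n + 1)))) : Wgrp n) := by
          rw [map_mul]
          group
        rw [hQ]
        refine sandwich _ _ _ (gp3_sq _) ?_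
        have e0 : tripSet (⟨sort3 i j (n + 1), okijk⟩ : TIdx (n + 1)) = ({i, j, n + 1} : Finset ℕ) :=
          tripSet_sort3 okijk
        have e2 : tripSet (⟨sort3 i (n + 1) l, okikl⟩ : TIdx (n + 1)) = ({i, n + 1, l} : Finset ℕ) :=
          tripSet_sort3 okikl
        rw [trip_swap23 i (n + 1) l] at e2
        have e3 : tripSet (⟨sort3 j (n + 1) l, okjkl⟩ : TIdx (n + 1)) = ({j, n + 1, l} : Finset ℕ) :=
          tripSet_sort3 okjkl
        rw [trip_swap23 j (n + 1) l] at e3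
        show (phiV (Multiplicative.ofAdd (dl (⟨sort3 i (n + 1) l, okikl⟩ : TIdx (n + 1)) + dl (⟨sort3 j (n + 1) l, okjkl⟩ : TIdx (n + 1)) + dl (⟨sort3 i j (n + 1), okijk⟩ : TIdx (n + 1)))) : MulAut (GP3 n))
            (PresentedGroup.of ((⟨sort3 i j l, oklow⟩ : TIdx n), (0 : ZMod 2))) = PresentedGroup.of ((⟨sort3 i j l, oklow⟩ : TIdx n), (0 : ZMod 2))
        refine tw_fix_core hin hjn hln hij hil hjl oklow _ ?_
        intro P Q hP hQ2
        simp only [Pi.add_apply]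
        rw [dl_eval e0 (by omega) (by omega) (by omega) (by omega),
          dl_eval e2 (by omega) (by omega) (by omega) (by omega),
          dl_eval e3 (by omega) (by omega) (by omega) (by omega)]
        ring
      · by_cases hjtop : j = n + 1
        · subst hjtop
          have hin : i ≤ n := by omega
          have hkn : k ≤ n := by omega
          have hln : l ≤ n := by omega
          have oklow : T3ok n (sort3 i k l) := T3ok_sort3 hi1 hk1 hl1 hin hkn hln hik hil hkl
          rw [Lmap_top (a := (⟨sort3 i (n + 1) k, okijk⟩ : TIdx (n + 1))) (show max i (max (n + 1) k) = n + 1 by omega),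
            Lmap_top (a := (⟨sort3 i (n + 1) l, okijl⟩ : TIdx (n + 1))) (show max i (max (n + 1) l) = n + 1 by omega),
            Lmap_low' (a := (⟨sort3 i k l, okikl⟩ : TIdx (n + 1))) (t := sort3 i k l) rfl (show max i (max k l) ≠ n + 1 by omega) oklow,
            Lmap_top (a := (⟨sort3 (n + 1) k l, okjkl⟩ : TIdx (n + 1))) (show max (n + 1) (max k l) = n + 1 by omega)]
          have hQ : SemidirectProduct.inr (Multiplicative.ofAdd (dl (⟨sort3 i (n + 1) k, okijk⟩ : TIdx (n + 1))))
                * SemidirectProduct.inr (Multiplicative.ofAdd (dl (⟨sort3 i (n + 1) l, okijl⟩ : TIdx (n + 1))))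
                * SemidirectProduct.inl (PresentedGroup.of ((⟨sort3 i k l, oklow⟩ : TIdx n), (0 : ZMod 2)))
                * SemidirectProduct.inr (Multiplicative.ofAdd (dl (⟨sort3 (n + 1) k l, okjkl⟩ : TIdx (n + 1))))
              = (SemidirectProduct.inr (Multiplicative.ofAdd (dl (⟨sort3 i (n + 1) k, okijk⟩ : TIdx (n + 1))) * Multiplicative.ofAdd (dl (⟨sort3 i (n + 1) l, okijl⟩ : TIdx (n + 1))))
                * SemidirectProduct.inl (PresentedGroup.of ((⟨sort3 i k l, oklow⟩ : TIdx n), (0 : ZMod 2)))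
                * SemidirectProduct.inr (Multiplicative.ofAdd (dl (⟨sort3 (n + 1) k l, okjkl⟩ : TIdx (n + 1)))) : Wgrp n) := by
            rw [map_mul]
          rw [hQ]
          refine sandwich _ _ _ (gp3_sq _) ?_
          have e0 : tripSet (⟨sort3 i (n + 1) k, okijk⟩ : TIdx (n + 1)) = ({i, n + 1, k} : Finset ℕ) :=
            tripSet_sort3 okijk
          rw [trip_swap23 i (n + 1) k] at e0
          have e1 : tripSet (⟨sort3 i (n + 1) l, okijl⟩ : TIdx (n + 1)) = ({i, n + 1, l} : Finset ℕ) :=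
            tripSet_sort3 okijl
          rw [trip_swap23 i (n + 1) l] at e1
          have e3 : tripSet (⟨sort3 (n + 1) k l, okjkl⟩ : TIdx (n + 1)) = ({n + 1, k, l} : Finset ℕ) :=
            tripSet_sort3 okjkl
          rw [trip_swap12 (n + 1) k l] at e3
          rw [trip_swap23 k (n + 1) l] at e3
          show (phiV (Multiplicative.ofAdd (dl (⟨sort3 (n + 1) k l, okjkl⟩ : TIdx (n + 1)) + (dl (⟨sort3 i (n + 1) k, okijk⟩ : TIdx (n + 1)) + dl (⟨sort3 i (n + 1) l, okijl⟩ : TIdx (n + 1))))) : MulAut (GP3 n))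
              (PresentedGroup.of ((⟨sort3 i k l, oklow⟩ : TIdx n), (0 : ZMod 2))) = PresentedGroup.of ((⟨sort3 i k l, oklow⟩ : TIdx n), (0 : ZMod 2))
          refine tw_fix_core hin hkn hln hik hil hkl oklow _ ?_
          intro P Q hP hQ2
          simp only [Pi.add_apply]
          rw [dl_eval e0 (by omega) (by omega) (by omega) (by omega),
            dl_eval e1 (by omega) (by omega) (by omega) (by omega),
            dl_eval e3 (by omega) (by omega) (by omega) (by omega)]
          ring
        · by_cases hitop : i = n + 1
          · subst hitop
            have hjn : j ≤ n := by omega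
            have hkn : k ≤ n := by omega
            have hln : l ≤ n := by omega
            have oklow : T3ok n (sort3 j k l) := T3ok_sort3 hj1 hk1 hl1 hjn hkn hln hjk hjl hkl
            rw [Lmap_top (a := (⟨sort3 (n + 1) j k, okijk⟩ : TIdx (n + 1))) (show max (n + 1) (max j k) = n + 1 by omega),
              Lmap_top (a := (⟨sort3 (n + 1) j l, okijl⟩ : TIdx (n + 1))) (show max (n + 1) (max j l) = n + 1 by omega),
              Lmap_top (a := (⟨sort3 (n + 1) k l, okikl⟩ : TIdx (n + 1))) (show max (n + 1) (max k l) = n + 1 by omega),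
              Lmap_low' (a := (⟨sort3 j k l, okjkl⟩ : TIdx (n + 1))) (t := sort3 j k l) rfl (show max j (max k l) ≠ n + 1 by omega) oklow]
            have hQ : SemidirectProduct.inr (Multiplicative.ofAdd (dl (⟨sort3 (n + 1) j k, okijk⟩ : TIdx (n + 1))))
                  * SemidirectProduct.inr (Multiplicative.ofAdd (dl (⟨sort3 (n + 1) j l, okijl⟩ : TIdx (n + 1))))
                  * SemidirectProduct.inr (Multiplicative.ofAdd (dl (⟨sort3 (n + 1) k l, okikl⟩ : TIdx (n + 1))))
                  * SemidirectProduct.inl (PresentedGroup.of ((⟨sort3 j k l, oklow⟩ : TIdx n), (0 : ZMod 2)))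
                = (SemidirectProduct.inr (Multiplicative.ofAdd (dl (⟨sort3 (n + 1) j k, okijk⟩ : TIdx (n + 1))) * (Multiplicative.ofAdd (dl (⟨sort3 (n + 1) j l, okijl⟩ : TIdx (n + 1))) * Multiplicative.ofAdd (dl (⟨sort3 (n + 1) k l, okikl⟩ : TIdx (n + 1)))))
                  * SemidirectProduct.inl (PresentedGroup.of ((⟨sort3 j k l, oklow⟩ : TIdx n), (0 : ZMod 2)))
                  * SemidirectProduct.inr ((1 : Multiplicative Vty)) : Wgrp n) := by
              rw [map_one, map_mul, map_mul]
              group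
            rw [hQ]
            refine sandwich _ _ _ (gp3_sq _) ?_
            rw [one_mul]
            have e0 : tripSet (⟨sort3 (n + 1) j k, okijk⟩ : TIdx (n + 1)) = ({n + 1, j, k} : Finset ℕ) :=
              tripSet_sort3 okijk
            rw [trip_swap12 (n + 1) j k] at e0
            rw [trip_swap23 j (n + 1) k] at e0
            have e1 : tripSet (⟨sort3 (n + 1) j l, okijl⟩ : TIdx (n + 1)) = ({n + 1, j, l} : Finset ℕ) :=
              tripSet_sort3 okijl
            rw [trip_swap12 (n + 1) j l] at e1
            rw [trip_swap23 j (n + 1) l] at e1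
            have e2 : tripSet (⟨sort3 (n + 1) k l, okikl⟩ : TIdx (n + 1)) = ({n + 1, k, l} : Finset ℕ) :=
              tripSet_sort3 okikl
            rw [trip_swap12 (n + 1) k l] at e2
            rw [trip_swap23 k (n + 1) l] at e2
            show (phiV (Multiplicative.ofAdd (dl (⟨sort3 (n + 1) j k, okijk⟩ : TIdx (n + 1)) + (dl (⟨sort3 (n + 1) j l, okijl⟩ : TIdx (n + 1)) + dl (⟨sort3 (n + 1) k l, okikl⟩ : TIdx (n + 1))))) : MulAut (GP3 n))
                (PresentedGroup.of ((⟨sort3 j k l, oklow⟩ : TIdx n), (0 : ZMod 2))) = PresentedGroup.of ((⟨sort3 j k l, oklow⟩ : TIdx n), (0 : ZMod 2))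
            refine tw_fix_core hjn hkn hln hjk hjl hkl oklow _ ?_
            intro P Q hP hQ2
            simp only [Pi.add_apply]
            rw [dl_eval e0 (by omega) (by omega) (by omega) (by omega),
              dl_eval e1 (by omega) (by omega) (by omega) (by omega),
              dl_eval e2 (by omega) (by omega) (by omega) (by omega)]
            ring
          · -- no index equals n+1
            have hin : i ≤ n := by omega
            have hjn : j ≤ n := by omega
            have hkn : k ≤ n := by omega
            have hln : l ≤ n := by omega
            have ok1 : T3ok n (sort3 i j k) := T3ok_sort3 hi1 hj1 hk1 hin hjn hkn hij hik hjk
            have ok2 : T3ok n (sort3 i j l) := T3ok_sort3 hi1 hj1 hl1 hin hjn hln hij hil hjl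
            have ok3 : T3ok n (sort3 i k l) := T3ok_sort3 hi1 hk1 hl1 hin hkn hln hik hil hkl
            have ok4 : T3ok n (sort3 j k l) := T3ok_sort3 hj1 hk1 hl1 hjn hkn hln hjk hjl hkl
            rw [Lmap_low' (a := (⟨sort3 i j k, okijk⟩ : TIdx (n + 1))) (t := sort3 i j k) rfl
                (show max i (max j k) ≠ n + 1 by omega) ok1,
              Lmap_low' (a := (⟨sort3 i j l, okijl⟩ : TIdx (n + 1))) (t := sort3 i j l) rfl
                (show max i (max j l) ≠ n + 1 by omega) ok2,
              Lmap_low' (a := (⟨sort3 i k l, okikl⟩ : TIdx (n + 1))) (t := sort3 i k l) rfl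
                (show max i (max k l) ≠ n + 1 by omega) ok3,
              Lmap_low' (a := (⟨sort3 j k l, okjkl⟩ : TIdx (n + 1))) (t := sort3 j k l) rfl
                (show max j (max k l) ≠ n + 1 by omega) ok4,
              ← map_mul, ← map_mul, ← map_mul, ← map_mul]
            have htetra := gp3_tetra hi1 hin hj1 hjn hk1 hkn hl1 hln hij hik hil hjk hjl hkl
              ok1 ok2 ok3 ok4
            rw [htetra, map_one]

end WD
namespace WD
open GnkBrunnian

variable {n : ℕ}

/-- The accumulated parity vector of a word. -/
def vOf (β : List (TIdx (n + 1))) : Vty :=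
  fun s => ((cnt3 β s.1 s.2 (n + 1) : ℕ) : ZMod 2)

lemma cnt3_append (β : List (TIdx (n + 1))) (a : TIdx (n + 1)) (p q r : ℕ) :
    cnt3 (β ++ [a]) p q r
      = cnt3 β p q r + (if tripSet a = ({p, q, r} : Finset ℕ) then 1 else 0) := by
  unfold cnt3
  rw [List.filter_append, List.length_append]
  congr 1
  by_cases h : tripSet a = ({p, q, r} : Finset ℕ) <;> simp [List.filter_singleton, h]

lemma vOf_append (β : List (TIdx (n + 1))) (a : TIdx (n + 1)) :
    vOf (β ++ [a]) = vOf β + dl a := by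
  funext s
  show ((cnt3 (β ++ [a]) s.1 s.2 (n + 1) : ℕ) : ZMod 2) = _
  rw [cnt3_append, Nat.cast_add]
  congr 1
  show ((if tripSet a = ({s.1, s.2, n + 1} : Finset ℕ) then (1 : ℕ) else 0 : ℕ) : ZMod 2)
    = dl a s
  show _ = if tripSet a = ({s.1, s.2, n + 1} : Finset ℕ) then (1 : ZMod 2) else 0
  split_ifs <;> simp

lemma mem_enum_lt {l : List (TIdx (n + 1))} {x : ℕ × TIdx (n + 1)} (hx : x ∈ (List.range l.length).zip l) :
    x.1 < l.length := by
  obtain ⟨i, y⟩ := x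
  exact List.mem_range.mp (List.of_mem_zip hx).1

lemma fWord_split (β : List (TIdx (n + 1))) (a : TIdx (n + 1)) :
    fWord n (β ++ [a]) = fWord n β ++
      (if a.1.2.2 = n + 1 then [] else
        ((tripMkS n a.1.1 a.1.2.1 a.1.2.2).map fun t =>
          (t, ((cnt3 β a.1.2.1 a.1.2.2 (n + 1) + cnt3 β a.1.1 a.1.2.2 (n + 1) : ℕ)
            : ZMod 2))).toList) := by
  unfold fWord
  have hz : (List.range (β ++ [a]).length).zip (β ++ [a])
      = (List.range β.length).zip β ++ [(β.length, a)] := by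
    rw [List.length_append, List.length_singleton, List.range_succ, List.zip_append (by simp)]
    rfl
  rw [hz, List.filterMap_append]
  congr 1
  · apply List.filterMap_congr
    intro x hx
    have hlt : x.1 < β.length := mem_enum_lt hx
    rw [List.take_append_of_le_length (by omega)]
  · show List.filterMap _ [(β.length, a)] = _
    by_cases ha : a.1.2.2 = n + 1
    · rw [List.filterMap_cons_none, if_pos ha]
      · rfl
      · simp only [if_pos ha]
    · rw [if_neg ha]
      have htake : (β ++ [a]).take β.length = β := List.take_left
      rcases ho : tripMkS n a.1.1 a.1.2.1 a.1.2.2 with _ | t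
      · rw [List.filterMap_cons_none]
        · rfl
        · simp only [if_neg ha, htake, ho, Option.map_none]
      · rw [List.filterMap_cons_some]
        · rfl
        · simp only [if_neg ha, htake, ho, Option.map_some]

lemma tripMkS_sorted {N : ℕ} {t : ℕ × ℕ × ℕ} (h : T3ok N t) :
    tripMkS N t.1 t.2.1 t.2.2 = some ⟨t, h⟩ := by
  have hs : sort3 t.1 t.2.1 t.2.2 = t := sort3_sorted h.2.1 h.2.2.1
  unfold tripMkS
  simp only [hs]
  rw [dif_pos h]

lemma Fhom_word (β : List (TIdx (n + 1))) :
    Fhom (n := n) ((β.map FreeGroup.of).prod)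
      = ⟨toGP3 (fWord n β), Multiplicative.ofAdd (vOf β)⟩ := by
  induction β using List.reverseRecOn with
  | nil =>
    have h1 : vOf (n := n) [] = 0 := by funext s; simp [vOf, cnt3]
    rw [h1]
    show Fhom (n := n) 1 = ⟨1, 1⟩
    rw [map_one]
    rfl
  | append_singleton β a ih =>
    rw [List.map_append, List.prod_append, map_mul, ih]
    have hlast : Fhom (n := n) ([a].map FreeGroup.of).prod = Lmap a := by
      simp [Fhom, FreeGroup.lift_apply_of]
    rw [hlast, vOf_append, fWord_split]
    by_cases ha : a.1.2.2 = n + 1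
    · rw [Lmap_top ha, if_pos ha, List.append_nil]
      ext : 1
      · show toGP3 (fWord n β) * (phiV (Multiplicative.ofAdd (vOf β)) : MulAut (GP3 n)) 1 = _
        rw [map_one, mul_one]
      · show Multiplicative.ofAdd (vOf β) * Multiplicative.ofAdd (dl a)
          = Multiplicative.ofAdd (vOf β + dl a)
        rfl
    · have hok : T3ok n a.1 := ⟨a.2.1, a.2.2.1, a.2.2.2.1, by have := a.2.2.2.2; omega⟩
      rw [Lmap_low' rfl ha hok, if_neg ha, tripMkS_sorted hok]
      ext : 1
      · show toGP3 (fWord n β)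
            * (phiV (Multiplicative.ofAdd (vOf β)) : MulAut (GP3 n))
              (PresentedGroup.of ((⟨a.1, hok⟩ : TIdx n), 0)) = _
        rw [phiV_of]
        show _ = toGP3 (fWord n β ++ [((⟨a.1, hok⟩ : TIdx n),
          ((cnt3 β a.1.2.1 a.1.2.2 (n + 1) + cnt3 β a.1.1 a.1.2.2 (n + 1) : ℕ) : ZMod 2))])
        unfold toGP3
        rw [List.map_append, List.prod_append]
        congr 1
        show (PresentedGroup.of (twIdx (vOf β) ((⟨a.1, hok⟩ : TIdx n), 0)) : GP3 n) = _
        simp only [List.map_cons, List.map_nil, List.prod_cons, List.prod_nil, mul_one]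
        congr 1
        unfold twIdx
        refine Prod.ext rfl ?_
        show (0 : ZMod 2) + vOf β (a.1.2.1, a.1.2.2) + vOf β (a.1.1, a.1.2.2)
          = ((cnt3 β a.1.2.1 a.1.2.2 (n + 1) + cnt3 β a.1.1 a.1.2.2 (n + 1) : ℕ) : ZMod 2)
        rw [Nat.cast_add, zero_add]
        rfl
      · show Multiplicative.ofAdd (vOf β) * 1 = Multiplicative.ofAdd (vOf β + dl a)
        have hdl : dl a = 0 := by
          funext s
          show (if tripSet a = ({s.1, s.2, n + 1} : Finset ℕ) then (1 : ZMod 2) else 0) = 0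
          rw [if_neg]
          intro hcontra
          have hmem : (n + 1 : ℕ) ∈ tripSet a := by rw [hcontra]; simp
          simp only [tripSet, Finset.mem_insert, Finset.mem_singleton] at hmem
          have h2 := a.2
          omega
        rw [hdl, add_zero, mul_one]
end WD
namespace WD
open GnkBrunnian

variable {n : ℕ}

lemma relsKilled' : ∀ r ∈ rels3 (n + 1), (FreeGroup.lift (Lmap (n := n))) r = 1 := relsKilled

/-- The induced homomorphism `G_{n+1}^3 →* GP3 n ⋊ parities`. -/
def Thom : G3 (n + 1) →* Wgrp n := PresentedGroup.toGroup relsKilled'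

lemma Thom_of (x : TIdx (n + 1)) : Thom (n := n) (PresentedGroup.of x) = Lmap x :=
  PresentedGroup.toGroup.of _

lemma Thom_word (γ : List (TIdx (n + 1))) :
    Thom (n := n) (toG3 γ) = ⟨toGP3 (fWord n γ), Multiplicative.ofAdd (vOf γ)⟩ := by
  rw [← Fhom_word]
  unfold toG3 Fhom
  rw [map_list_prod, map_list_prod, List.map_map, List.map_map]
  congr 1

end WD
theorem statement_16 (n : ℕ) (hn : 3 ≤ n)
    (β β' : List (TIdx (n + 1))) (h : toG3 β = toG3 β') :
    toGP3 (fWord n β) = toGP3 (fWord n β') := by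
  have h2 := congrArg (WD.Thom (n := n)) h
  rw [WD.Thom_word, WD.Thom_word] at h2
  exact congrArg SemidirectProduct.left h2

end GnkBrunnian
end
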